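/- arXiv:2203.03494 — 4 statements merged into one kernel-verified Lean document; each statement's English description precedes it below -/
import Mathlib

section
/- For every integer N ≥ 13 there exists a real polynomial g ∈ ℝ[x₁,x₂,x₃] with non-negative coefficients such that g(x₁,x₂,x₃) = 1 whenever x₁ + x₂ + x₃ = 1, every triple (a,b,c) ∈ ℕ³ in the support of g satisfies 3 ∣ a + b + 2c, and the support of g has exactly N elements. -/
open MvPolynomial Finset

noncomputable section
def e3 (a b c : ℕ) : Fin 3 →₀ ℕ := Finsupp.equivFunOnFinite.symm ![a, b, c]
def mono (a b c : ℕ) (r : ℝ) : MvPolynomial (Fin 3) ℝ := monomial (e3 a b c) r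
lemma e3_apply (a b c : ℕ) (i : Fin 3) : e3 a b c i = ![a,b,c] i := rfl
def phi (α : Fin 3 →₀ ℕ) : ℕ × ℕ × ℕ := (α 0, α 1, α 2)
lemma phi_inj : Function.Injective phi := by
  intro α β h
  ext i
  fin_cases i <;> simp [phi, Prod.ext_iff] at h ⊢ <;> tauto
lemma phi_e3 (a b c : ℕ) : phi (e3 a b c) = (a, b, c) := by
  simp [phi, e3_apply]
lemma e3_eq (a b c : ℕ) : e3 a b c = Finsupp.single 0 a + Finsupp.single 1 b + Finsupp.single 2 c := by
  ext i
  fin_cases i <;> simp [e3_apply, Finsupp.single_apply]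
lemma mono_eq (a b c : ℕ) (r : ℝ) :
    mono a b c r = C r * X 0 ^ a * X 1 ^ b * X 2 ^ c := by
  rw [mono, e3_eq, X_pow_eq_monomial, X_pow_eq_monomial, X_pow_eq_monomial]
  simp [C_mul_monomial, monomial_mul, add_assoc]
lemma eval_mono (x : Fin 3 → ℝ) (a b c : ℕ) (r : ℝ) :
    eval x (mono a b c r) = r * x 0 ^ a * x 1 ^ b * x 2 ^ c := by
  rw [mono_eq]; simp
lemma coeff_mono (α : Fin 3 →₀ ℕ) (a b c : ℕ) (r : ℝ) :
    coeff α (mono a b c r) = if e3 a b c = α then r else 0 := coeff_monomial α (e3 a b c) r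
lemma coeff_mono_nonneg (α : Fin 3 →₀ ℕ) (a b c : ℕ) {r : ℝ} (h : 0 ≤ r) :
    0 ≤ coeff α (mono a b c r) := by
  rw [coeff_mono]; split <;> simp [h]
lemma support_mono (a b c : ℕ) {r : ℝ} (h : r ≠ 0) :
    (mono a b c r).support = {e3 a b c} := by classical
  rw [mono, support_monomial]; simp [h]
lemma supp_add (p q : MvPolynomial (Fin 3) ℝ) (hp : ∀ α, 0 ≤ coeff α p)
    (hq : ∀ α, 0 ≤ coeff α q) : (p + q).support = p.support ∪ q.support := by
  ext α
  simp only [mem_support_iff, coeff_add, Finset.mem_union]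
  constructor
  · intro h
    by_contra hc
    push_neg at hc
    simp [hc.1, hc.2] at h
  · intro h hc
    rcases (add_eq_zero_iff_of_nonneg (hp α) (hq α)).1 hc with ⟨h1, h2⟩
    tauto

/-- polynomial from a list of (a,b,c,coefficient) -/
def mlist (L : List (ℕ × ℕ × ℕ × ℝ)) : MvPolynomial (Fin 3) ℝ :=
  (L.map fun q => mono q.1 q.2.1 q.2.2.1 q.2.2.2).sum

lemma mlist_nil : mlist [] = 0 := rfl
lemma mlist_cons (q) (L : List (ℕ × ℕ × ℕ × ℝ)) :
    mlist (q :: L) = mono q.1 q.2.1 q.2.2.1 q.2.2.2 + mlist L := by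
  simp [mlist]

lemma coeff_mlist_nonneg (L : List (ℕ × ℕ × ℕ × ℝ)) (h : ∀ q ∈ L, 0 ≤ q.2.2.2)
    (α : Fin 3 →₀ ℕ) : 0 ≤ coeff α (mlist L) := by
  induction L with
  | nil => simp [mlist_nil]
  | cons q L ih =>
      rw [mlist_cons, coeff_add]
      exact add_nonneg (coeff_mono_nonneg _ _ _ _ (h q (by simp)))
        (ih fun p hp => h p (by simp [hp]))

lemma supp_mlist (L : List (ℕ × ℕ × ℕ × ℝ)) (h : ∀ q ∈ L, 0 < q.2.2.2) :
    (mlist L).support = (L.map fun q => e3 q.1 q.2.1 q.2.2.1).toFinset := by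
  induction L with
  | nil => simp [mlist_nil]
  | cons q L ih =>
      rw [mlist_cons, supp_add _ _ (fun α => coeff_mono_nonneg _ _ _ _ (h q (by simp)).le)
        (coeff_mlist_nonneg L (fun p hp => (h p (by simp [hp])).le)),
        support_mono _ _ _ (h q (by simp)).ne', ih fun p hp => h p (by simp [hp])]
      rw [List.map_cons, List.toFinset_cons, Finset.insert_eq]

lemma eval_mlist (x : Fin 3 → ℝ) (L : List (ℕ × ℕ × ℕ × ℝ)) :
    eval x (mlist L) = (L.map fun q => q.2.2.2 * x 0 ^ q.1 * x 1 ^ q.2.1 * x 2 ^ q.2.2.1).sum := by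
  induction L with
  | nil => simp [mlist_nil]
  | cons q L ih => rw [mlist_cons]; simp [eval_mono, ih]

lemma imsupp_mlist (L : List (ℕ × ℕ × ℕ × ℝ)) (h : ∀ q ∈ L, 0 < q.2.2.2) :
    (mlist L).support.image phi = (L.map fun q => (q.1, q.2.1, q.2.2.1)).toFinset := by
  rw [supp_mlist L h]
  clear h
  induction L with
  | nil => simp
  | cons q L ih => simp [Finset.image_insert, phi_e3, ih]


lemma coeff_sum_nonneg {X : Type*} (s : Finset X) (f : X → MvPolynomial (Fin 3) ℝ)
    (hf : ∀ j α, 0 ≤ coeff α (f j)) (α : Fin 3 →₀ ℕ) : 0 ≤ coeff α (s.sum f) := by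
  rw [coeff_sum]
  exact Finset.sum_nonneg fun j _ => hf j α

lemma supp_sum_range (f : ℕ → MvPolynomial (Fin 3) ℝ)
    (hf : ∀ j α, 0 ≤ coeff α (f j)) (k : ℕ) :
    ((range k).sum f).support = (range k).biUnion (fun j => (f j).support) := by
  induction k with
  | zero => simp
  | succ k ih =>
      rw [Finset.sum_range_succ, supp_add _ _ (coeff_sum_nonneg _ _ hf) (hf k), ih,
        Finset.range_add_one, Finset.biUnion_insert]
      exact Finset.union_comm _ _

/-- the basic block of the chain -/
def Hb (j : ℕ) : MvPolynomial (Fin 3) ℝ :=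
  mlist [(3,0,3*j,1),(2,1,3*j,3),(1,2,3*j,3),(0,3,3*j,1),(1,0,3*j+1,3),(0,1,3*j+1,3)]

lemma Hb_pos : ∀ q ∈ ([(3,0,3*j,1),(2,1,3*j,3),(1,2,3*j,3),(0,3,3*j,1),(1,0,3*j+1,3),(0,1,3*j+1,3)] :
    List (ℕ × ℕ × ℕ × ℝ)), 0 < q.2.2.2 := by
  intro q hq
  fin_cases hq <;> norm_num

lemma Hb_nonneg (j : ℕ) (α : Fin 3 →₀ ℕ) : 0 ≤ coeff α (Hb j) :=
  coeff_mlist_nonneg _ (fun q hq => (Hb_pos q hq).le) α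

/-- the chain polynomial -/
def T (k : ℕ) : MvPolynomial (Fin 3) ℝ := (range k).sum Hb + mono 0 0 (3*k) 1

lemma T_nonneg (k : ℕ) (α : Fin 3 →₀ ℕ) : 0 ≤ coeff α (T k) := by
  rw [T, coeff_add]
  exact add_nonneg (coeff_sum_nonneg _ _ Hb_nonneg α) (coeff_mono_nonneg _ _ _ _ one_pos.le)

lemma eval_Hb (x y z : ℝ) (j : ℕ) :
    eval ![x, y, z] (Hb j) =
      z ^ (3*j) * (x^3 + 3*x^2*y + 3*x*y^2 + y^3 + 3*x*z + 3*y*z) := by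
  simp [Hb, eval_mlist]
  ring

lemma eval_sum_Hb (x y z : ℝ) (h : x + y + z = 1) (k : ℕ) :
    eval ![x, y, z] ((range k).sum Hb) = 1 - z ^ (3*k) := by
  induction k with
  | zero => simp
  | succ k ih =>
      rw [Finset.sum_range_succ, map_add, ih, eval_Hb]
      have hx : x = 1 - y - z := by linarith
      subst hx
      ring

lemma eval_T (x y z : ℝ) (h : x + y + z = 1) (k : ℕ) :
    eval ![x, y, z] (T k) = 1 := by
  rw [T, map_add, eval_sum_Hb x y z h, eval_mono]
  simp


def Bfix : Finset (ℕ × ℕ × ℕ) := {(3,0,0),(2,1,0),(1,2,0),(0,3,0),(1,0,1),(0,1,1)}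

def shift (j : ℕ) (t : ℕ × ℕ × ℕ) : ℕ × ℕ × ℕ := (t.1, t.2.1, 3*j + t.2.2)

lemma shift_inj (j : ℕ) : Function.Injective (shift j) := by
  intro a b h
  simp only [shift, Prod.ext_iff] at h
  obtain ⟨h1, h2, h3⟩ := h
  exact Prod.ext h1 (Prod.ext h2 (by omega))

lemma imsupp_Hb (j : ℕ) : (Hb j).support.image phi = Bfix.image (shift j) := by
  rw [Hb, imsupp_mlist _ Hb_pos]
  simp [Bfix, shift, Finset.image_insert]

lemma card_imBfix (j : ℕ) : (Bfix.image (shift j)).card = 6 := by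
  rw [Finset.card_image_of_injective _ (shift_inj j)]
  decide

lemma mem_imBfix {j : ℕ} {t : ℕ × ℕ × ℕ} (h : t ∈ Bfix.image (shift j)) :
    (t.2.2 = 3*j ∨ t.2.2 = 3*j + 1) ∧ 1 ≤ t.1 + t.2.1 ∧ 3 ∣ t.1 + t.2.1 + 2 * t.2.2 := by
  simp only [Finset.mem_image] at h
  obtain ⟨s, hs, rfl⟩ := h
  fin_cases hs <;> simp [shift] <;> omega

lemma supp_T (k : ℕ) : (T k).support =
    (range k).biUnion (fun j => (Hb j).support) ∪ {e3 0 0 (3*k)} := by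
  rw [T, supp_add _ _ (coeff_sum_nonneg _ _ Hb_nonneg)
    (fun α => coeff_mono_nonneg α _ _ _ one_pos.le),
    supp_sum_range _ Hb_nonneg, support_mono _ _ _ one_ne_zero]

lemma imsupp_T (k : ℕ) : (T k).support.image phi =
    ((range k).biUnion (fun j => Bfix.image (shift j))) ∪ {(0,0,3*k)} := by
  rw [supp_T, Finset.image_union, Finset.biUnion_image, Finset.image_singleton, phi_e3]
  congr 1
  apply Finset.biUnion_congr rfl
  intro j _
  exact imsupp_Hb j


def ImG (k e : ℕ) : Finset (ℕ × ℕ × ℕ) :=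
  ((range k).biUnion fun j => Bfix.image (shift j)) ∪
    insert (0,0,3*k) ((range e).image fun i => (0,0,3*i))

lemma dvd_ImG {k e : ℕ} {t : ℕ × ℕ × ℕ} (h : t ∈ ImG k e) :
    3 ∣ t.1 + t.2.1 + 2 * t.2.2 := by
  simp only [ImG, Finset.mem_union, Finset.mem_biUnion, Finset.mem_insert,
    Finset.mem_image, Finset.mem_range] at h
  rcases h with ⟨j, _, hj⟩ | rfl | ⟨i, _, rfl⟩
  · exact (mem_imBfix (Finset.mem_image.mpr hj)).2.2
  · simp; omega
  · simp; omega

lemma card_ImG {k e : ℕ} (he : e ≤ k) : (ImG k e).card = 6 * k + 1 + e := by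
  rw [ImG, Finset.card_union_of_disjoint, Finset.card_biUnion]
  · have h1 : ∀ j ∈ range k, (Bfix.image (shift j)).card = 6 := fun j _ => card_imBfix j
    rw [Finset.sum_congr rfl h1, Finset.sum_const, Finset.card_range,
      Finset.card_insert_of_notMem, Finset.card_image_of_injective]
    · simp only [smul_eq_mul, Finset.card_range]
      omega
    · intro a b hab
      simp only [Prod.ext_iff] at hab
      omega
    · simp only [Finset.mem_image, Finset.mem_range, Prod.ext_iff, not_exists]
      intro i hi
      omega
  · intro i hi j hj hij
    rw [Function.onFun, Finset.disjoint_left]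
    intro t hti htj
    have h1 := (mem_imBfix hti).1
    have h2 := (mem_imBfix htj).1
    simp only [Finset.mem_coe, Finset.mem_range] at hi hj
    omega
  · rw [Finset.disjoint_left]
    intro t ht ht'
    obtain ⟨j, _, hj⟩ := Finset.mem_biUnion.1 ht
    have h1 := (mem_imBfix hj).2.1
    simp only [Finset.mem_insert, Finset.mem_image, Finset.mem_range] at ht'
    rcases ht' with rfl | ⟨i, _, rfl⟩ <;> simp at h1

def SG (k e : ℕ) : MvPolynomial (Fin 3) ℝ := T k + (range e).sum T

lemma imsupp_SG {k e : ℕ} (he : e ≤ k) :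
    (SG k e).support.image phi = ImG k e := by
  rw [SG, supp_add _ _ (T_nonneg k) (coeff_sum_nonneg _ _ T_nonneg),
    supp_sum_range _ T_nonneg, Finset.image_union, Finset.biUnion_image, imsupp_T]
  have himT : ∀ i, ((T i).support.image phi) =
      ((range i).biUnion fun j => Bfix.image (shift j)) ∪ {(0,0,3*i)} := imsupp_T
  ext t
  simp only [Finset.mem_union, Finset.mem_biUnion, Finset.mem_range, himT,
    Finset.mem_singleton, ImG, Finset.mem_insert, Finset.mem_image]
  constructor
  · rintro ((⟨j, hj, hB⟩ | rfl) | ⟨i, hi, (⟨j, hj, hB⟩ | rfl)⟩)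
    · exact Or.inl ⟨j, hj, hB⟩
    · exact Or.inr (Or.inl rfl)
    · exact Or.inl ⟨j, by omega, hB⟩
    · exact Or.inr (Or.inr ⟨i, by simpa using hi, rfl⟩)
  · rintro (⟨j, hj, hB⟩ | rfl | ⟨i, hi, rfl⟩)
    · exact Or.inl (Or.inl ⟨j, hj, hB⟩)
    · exact Or.inl (Or.inr rfl)
    · exact Or.inr ⟨i, by simpa using hi, Or.inr rfl⟩

lemma supp_C_mul {c : ℝ} (hc : c ≠ 0) (p : MvPolynomial (Fin 3) ℝ) :
    (C c * p).support = p.support := by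
  ext α
  simp [mem_support_iff, coeff_C_mul, hc]

lemma generic_case (k e : ℕ) (he : e ≤ k) :
    ∃ g : MvPolynomial (Fin 3) ℝ,
      (∀ α, 0 ≤ g.coeff α) ∧
      (∀ x₁ x₂ x₃ : ℝ, x₁ + x₂ + x₃ = 1 → eval ![x₁, x₂, x₃] g = 1) ∧
      (∀ α ∈ g.support, 3 ∣ α 0 + α 1 + 2 * α 2) ∧
      g.support.card = 6 * k + 1 + e := by
  have hne : ((e : ℝ) + 1) ≠ 0 := by positivity
  refine ⟨C ((e : ℝ) + 1)⁻¹ * SG k e, ?_, ?_, ?_, ?_⟩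
  · intro α
    rw [coeff_C_mul]
    refine mul_nonneg (by positivity) ?_
    rw [SG, coeff_add]
    exact add_nonneg (T_nonneg k α) (coeff_sum_nonneg _ _ T_nonneg α)
  · intro x y z h
    rw [map_mul, eval_C, SG, map_add, eval_T x y z h, map_sum,
      Finset.sum_congr rfl (fun i _ => eval_T x y z h i), Finset.sum_const,
      Finset.card_range]
    simp
    field_simp
    ring
  · intro α hα
    rw [supp_C_mul (by positivity) _] at hα
    have ht : phi α ∈ ImG k e := by
      rw [← imsupp_SG he]
      exact Finset.mem_image_of_mem phi hα
    exact dvd_ImG ht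
  · rw [supp_C_mul (by positivity) _, ← Finset.card_image_of_injective _ phi_inj,
      imsupp_SG he, card_ImG he]


def spec16L : List (ℕ × ℕ × ℕ × ℝ) := [(0,0,3,(1:ℝ)),(0,1,1,(3:ℝ)),(0,3,0,(1:ℝ)),(1,0,1,(3:ℝ)),(1,2,0,(3:ℝ)),(2,1,0,((3:ℝ)/2)),(2,1,3,((3:ℝ)/2)),(2,2,1,((9:ℝ)/2)),(2,4,0,((3:ℝ)/2)),(3,0,3,(1:ℝ)),(3,1,1,((15:ℝ)/2)),(3,3,0,((11:ℝ)/2)),(4,0,1,(3:ℝ)),(4,2,0,((15:ℝ)/2)),(5,1,0,((9:ℝ)/2)),(6,0,0,(1:ℝ))]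

lemma spec16_pos : ∀ q ∈ spec16L, 0 < q.2.2.2 := by
  intro q hq
  fin_cases hq <;> norm_num

lemma spec16_spec :
    ∃ g : MvPolynomial (Fin 3) ℝ,
      (∀ α, 0 ≤ g.coeff α) ∧
      (∀ x₁ x₂ x₃ : ℝ, x₁ + x₂ + x₃ = 1 → eval ![x₁, x₂, x₃] g = 1) ∧
      (∀ α ∈ g.support, 3 ∣ α 0 + α 1 + 2 * α 2) ∧
      g.support.card = 16 := by
  refine ⟨mlist spec16L, fun α => coeff_mlist_nonneg _ (fun q hq => (spec16_pos q hq).le) α, ?_, ?_, ?_⟩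
  · intro x y z h
    have hz : z = 1 - x - y := by linarith
    subst hz
    rw [eval_mlist]
    simp [spec16L]
    ring
  · intro α hα
    have ht : phi α ∈ ((spec16L.map fun q => (q.1, q.2.1, q.2.2.1)).toFinset) := by
      rw [← imsupp_mlist _ spec16_pos]
      exact Finset.mem_image_of_mem phi hα
    have hd : ∀ t ∈ ((spec16L.map fun q => (q.1, q.2.1, q.2.2.1)).toFinset),
        3 ∣ t.1 + t.2.1 + 2 * t.2.2 := by decide
    exact hd _ ht
  · rw [← Finset.card_image_of_injective _ phi_inj, imsupp_mlist _ spec16_pos]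
    decide


def spec17L : List (ℕ × ℕ × ℕ × ℝ) := [(0,0,3,(1:ℝ)),(0,1,1,(3:ℝ)),(0,3,0,(1:ℝ)),(1,0,1,(3:ℝ)),(1,2,3,(3:ℝ)),(1,3,1,(9:ℝ)),(1,5,0,(3:ℝ)),(2,1,0,(3:ℝ)),(2,2,1,(9:ℝ)),(2,4,0,(9:ℝ)),(3,0,3,(1:ℝ)),(3,1,1,(3:ℝ)),(3,3,0,(10:ℝ)),(4,0,1,(3:ℝ)),(4,2,0,(6:ℝ)),(5,1,0,(3:ℝ)),(6,0,0,(1:ℝ))]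

lemma spec17_pos : ∀ q ∈ spec17L, 0 < q.2.2.2 := by
  intro q hq
  fin_cases hq <;> norm_num

lemma spec17_spec :
    ∃ g : MvPolynomial (Fin 3) ℝ,
      (∀ α, 0 ≤ g.coeff α) ∧
      (∀ x₁ x₂ x₃ : ℝ, x₁ + x₂ + x₃ = 1 → eval ![x₁, x₂, x₃] g = 1) ∧
      (∀ α ∈ g.support, 3 ∣ α 0 + α 1 + 2 * α 2) ∧
      g.support.card = 17 := by
  refine ⟨mlist spec17L, fun α => coeff_mlist_nonneg _ (fun q hq => (spec17_pos q hq).le) α, ?_, ?_, ?_⟩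
  · intro x y z h
    have hz : z = 1 - x - y := by linarith
    subst hz
    rw [eval_mlist]
    simp [spec17L]
    ring
  · intro α hα
    have ht : phi α ∈ ((spec17L.map fun q => (q.1, q.2.1, q.2.2.1)).toFinset) := by
      rw [← imsupp_mlist _ spec17_pos]
      exact Finset.mem_image_of_mem phi hα
    have hd : ∀ t ∈ ((spec17L.map fun q => (q.1, q.2.1, q.2.2.1)).toFinset),
        3 ∣ t.1 + t.2.1 + 2 * t.2.2 := by decide
    exact hd _ ht
  · rw [← Finset.card_image_of_injective _ phi_inj, imsupp_mlist _ spec17_pos]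
    decide


def spec18L : List (ℕ × ℕ × ℕ × ℝ) := [(0,0,3,(1:ℝ)),(0,1,1,(3:ℝ)),(0,3,3,(1:ℝ)),(0,4,1,(3:ℝ)),(0,6,0,(1:ℝ)),(1,0,1,(3:ℝ)),(1,2,0,(3:ℝ)),(1,3,1,(3:ℝ)),(1,5,0,(3:ℝ)),(2,1,0,(3:ℝ)),(2,4,0,(3:ℝ)),(3,0,3,(1:ℝ)),(3,1,1,(3:ℝ)),(3,3,0,(2:ℝ)),(4,0,1,(3:ℝ)),(4,2,0,(3:ℝ)),(5,1,0,(3:ℝ)),(6,0,0,(1:ℝ))]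

lemma spec18_pos : ∀ q ∈ spec18L, 0 < q.2.2.2 := by
  intro q hq
  fin_cases hq <;> norm_num

lemma spec18_spec :
    ∃ g : MvPolynomial (Fin 3) ℝ,
      (∀ α, 0 ≤ g.coeff α) ∧
      (∀ x₁ x₂ x₃ : ℝ, x₁ + x₂ + x₃ = 1 → eval ![x₁, x₂, x₃] g = 1) ∧
      (∀ α ∈ g.support, 3 ∣ α 0 + α 1 + 2 * α 2) ∧
      g.support.card = 18 := by
  refine ⟨mlist spec18L, fun α => coeff_mlist_nonneg _ (fun q hq => (spec18_pos q hq).le) α, ?_, ?_, ?_⟩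
  · intro x y z h
    have hz : z = 1 - x - y := by linarith
    subst hz
    rw [eval_mlist]
    simp [spec18L]
    ring
  · intro α hα
    have ht : phi α ∈ ((spec18L.map fun q => (q.1, q.2.1, q.2.2.1)).toFinset) := by
      rw [← imsupp_mlist _ spec18_pos]
      exact Finset.mem_image_of_mem phi hα
    have hd : ∀ t ∈ ((spec18L.map fun q => (q.1, q.2.1, q.2.2.1)).toFinset),
        3 ∣ t.1 + t.2.1 + 2 * t.2.2 := by decide
    exact hd _ ht
  · rw [← Finset.card_image_of_injective _ phi_inj, imsupp_mlist _ spec18_pos]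
    decide


def spec23L : List (ℕ × ℕ × ℕ × ℝ) := [(0,0,6,(1:ℝ)),(0,1,4,(6:ℝ)),(0,2,2,(9:ℝ)),(0,3,0,(1:ℝ)),(0,3,3,(1:ℝ)),(0,4,1,(3:ℝ)),(1,0,1,(3:ℝ)),(1,0,4,(3:ℝ)),(1,1,2,(9:ℝ)),(1,2,3,(6:ℝ)),(1,3,1,(18:ℝ)),(1,5,0,(3:ℝ)),(2,1,0,(3:ℝ)),(2,1,3,(3:ℝ)),(2,2,1,(18:ℝ)),(2,4,0,(9:ℝ)),(3,0,3,(2:ℝ)),(3,1,1,(6:ℝ)),(3,3,0,(10:ℝ)),(4,0,1,(3:ℝ)),(4,2,0,(6:ℝ)),(5,1,0,(3:ℝ)),(6,0,0,(1:ℝ))]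

lemma spec23_pos : ∀ q ∈ spec23L, 0 < q.2.2.2 := by
  intro q hq
  fin_cases hq <;> norm_num

lemma spec23_spec :
    ∃ g : MvPolynomial (Fin 3) ℝ,
      (∀ α, 0 ≤ g.coeff α) ∧
      (∀ x₁ x₂ x₃ : ℝ, x₁ + x₂ + x₃ = 1 → eval ![x₁, x₂, x₃] g = 1) ∧
      (∀ α ∈ g.support, 3 ∣ α 0 + α 1 + 2 * α 2) ∧
      g.support.card = 23 := by
  refine ⟨mlist spec23L, fun α => coeff_mlist_nonneg _ (fun q hq => (spec23_pos q hq).le) α, ?_, ?_, ?_⟩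
  · intro x y z h
    have hz : z = 1 - x - y := by linarith
    subst hz
    rw [eval_mlist]
    simp [spec23L]
    ring
  · intro α hα
    have ht : phi α ∈ ((spec23L.map fun q => (q.1, q.2.1, q.2.2.1)).toFinset) := by
      rw [← imsupp_mlist _ spec23_pos]
      exact Finset.mem_image_of_mem phi hα
    have hd : ∀ t ∈ ((spec23L.map fun q => (q.1, q.2.1, q.2.2.1)).toFinset),
        3 ∣ t.1 + t.2.1 + 2 * t.2.2 := by decide
    exact hd _ ht
  · rw [← Finset.card_image_of_injective _ phi_inj, imsupp_mlist _ spec23_pos]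
    decide


def spec24L : List (ℕ × ℕ × ℕ × ℝ) := [(0,0,6,(1:ℝ)),(0,1,1,(3:ℝ)),(0,1,4,(3:ℝ)),(0,3,3,(2:ℝ)),(0,4,1,(3:ℝ)),(0,6,0,(1:ℝ)),(1,0,4,(6:ℝ)),(1,1,2,(9:ℝ)),(1,2,0,(3:ℝ)),(1,2,3,(3:ℝ)),(1,3,1,(6:ℝ)),(1,5,0,(3:ℝ)),(2,0,2,(9:ℝ)),(2,1,0,(3:ℝ)),(2,1,3,(3:ℝ)),(2,2,1,(9:ℝ)),(2,4,0,(3:ℝ)),(3,0,3,(2:ℝ)),(3,1,1,(12:ℝ)),(3,3,0,(2:ℝ)),(4,0,1,(6:ℝ)),(4,2,0,(3:ℝ)),(5,1,0,(3:ℝ)),(6,0,0,(1:ℝ))]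

lemma spec24_pos : ∀ q ∈ spec24L, 0 < q.2.2.2 := by
  intro q hq
  fin_cases hq <;> norm_num

lemma spec24_spec :
    ∃ g : MvPolynomial (Fin 3) ℝ,
      (∀ α, 0 ≤ g.coeff α) ∧
      (∀ x₁ x₂ x₃ : ℝ, x₁ + x₂ + x₃ = 1 → eval ![x₁, x₂, x₃] g = 1) ∧
      (∀ α ∈ g.support, 3 ∣ α 0 + α 1 + 2 * α 2) ∧
      g.support.card = 24 := by
  refine ⟨mlist spec24L, fun α => coeff_mlist_nonneg _ (fun q hq => (spec24_pos q hq).le) α, ?_, ?_, ?_⟩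
  · intro x y z h
    have hz : z = 1 - x - y := by linarith
    subst hz
    rw [eval_mlist]
    simp [spec24L]
    ring
  · intro α hα
    have ht : phi α ∈ ((spec24L.map fun q => (q.1, q.2.1, q.2.2.1)).toFinset) := by
      rw [← imsupp_mlist _ spec24_pos]
      exact Finset.mem_image_of_mem phi hα
    have hd : ∀ t ∈ ((spec24L.map fun q => (q.1, q.2.1, q.2.2.1)).toFinset),
        3 ∣ t.1 + t.2.1 + 2 * t.2.2 := by decide
    exact hd _ ht
  · rw [← Finset.card_image_of_injective _ phi_inj, imsupp_mlist _ spec24_pos]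
    decide


def spec30L : List (ℕ × ℕ × ℕ × ℝ) := [(0,0,3,(1:ℝ)),(0,1,4,(3:ℝ)),(0,2,5,(9:ℝ)),(0,3,3,(28:ℝ)),(0,4,1,(6:ℝ)),(0,5,2,(9:ℝ)),(0,6,0,(1:ℝ)),(1,0,4,(3:ℝ)),(1,1,2,(18:ℝ)),(1,2,0,(3:ℝ)),(1,2,3,(27:ℝ)),(1,3,1,(15:ℝ)),(1,4,2,(27:ℝ)),(1,5,0,(3:ℝ)),(2,0,5,(9:ℝ)),(2,1,0,(3:ℝ)),(2,1,3,(27:ℝ)),(2,2,1,(18:ℝ)),(2,3,2,(36:ℝ)),(2,4,0,(3:ℝ)),(3,0,3,(28:ℝ)),(3,1,1,(15:ℝ)),(3,2,2,(36:ℝ)),(3,3,0,(2:ℝ)),(4,0,1,(6:ℝ)),(4,1,2,(27:ℝ)),(4,2,0,(3:ℝ)),(5,0,2,(9:ℝ)),(5,1,0,(3:ℝ)),(6,0,0,(1:ℝ))]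

lemma spec30_pos : ∀ q ∈ spec30L, 0 < q.2.2.2 := by
  intro q hq
  fin_cases hq <;> norm_num

lemma spec30_spec :
    ∃ g : MvPolynomial (Fin 3) ℝ,
      (∀ α, 0 ≤ g.coeff α) ∧
      (∀ x₁ x₂ x₃ : ℝ, x₁ + x₂ + x₃ = 1 → eval ![x₁, x₂, x₃] g = 1) ∧
      (∀ α ∈ g.support, 3 ∣ α 0 + α 1 + 2 * α 2) ∧
      g.support.card = 30 := by
  refine ⟨mlist spec30L, fun α => coeff_mlist_nonneg _ (fun q hq => (spec30_pos q hq).le) α, ?_, ?_, ?_⟩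
  · intro x y z h
    have hz : z = 1 - x - y := by linarith
    subst hz
    rw [eval_mlist]
    simp [spec30L]
    ring
  · intro α hα
    have ht : phi α ∈ ((spec30L.map fun q => (q.1, q.2.1, q.2.2.1)).toFinset) := by
      rw [← imsupp_mlist _ spec30_pos]
      exact Finset.mem_image_of_mem phi hα
    have hd : ∀ t ∈ ((spec30L.map fun q => (q.1, q.2.1, q.2.2.1)).toFinset),
        3 ∣ t.1 + t.2.1 + 2 * t.2.2 := by decide
    exact hd _ ht
  · rw [← Finset.card_image_of_injective _ phi_inj, imsupp_mlist _ spec30_pos]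
    decide


end

open MvPolynomial

/-- For every `N ≥ 13` there is a polynomial in three variables with non-negative
coefficients, equal to `1` on `x₁ + x₂ + x₃ = 1`, invariant under
`⟨ωI₂ ⊕ ω²I₁⟩` for `ω` a primitive cube root of unity (`3 ∣ a + b + 2c` on the
support), with support of cardinality exactly `N`. -/
theorem stmt_11 (N : ℕ) (hN : 13 ≤ N) :
    ∃ g : MvPolynomial (Fin 3) ℝ,
      (∀ α, 0 ≤ g.coeff α) ∧
      (∀ x₁ x₂ x₃ : ℝ, x₁ + x₂ + x₃ = 1 → eval ![x₁, x₂, x₃] g = 1) ∧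
      (∀ α ∈ g.support, 3 ∣ α 0 + α 1 + 2 * α 2) ∧
      g.support.card = N := by
  have hcase : N = 16 ∨ N = 17 ∨ N = 18 ∨ N = 23 ∨ N = 24 ∨ N = 30 ∨
      ∃ k e, e ≤ k ∧ N = 6 * k + 1 + e := by
    by_cases h16 : N = 16
    · exact Or.inl h16
    by_cases h17 : N = 17
    · exact Or.inr (Or.inl h17)
    by_cases h18 : N = 18
    · exact Or.inr (Or.inr (Or.inl h18))
    by_cases h23 : N = 23
    · exact Or.inr (Or.inr (Or.inr (Or.inl h23)))
    by_cases h24 : N = 24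
    · exact Or.inr (Or.inr (Or.inr (Or.inr (Or.inl h24))))
    by_cases h30 : N = 30
    · exact Or.inr (Or.inr (Or.inr (Or.inr (Or.inr (Or.inl h30)))))
    refine Or.inr (Or.inr (Or.inr (Or.inr (Or.inr (Or.inr
      ⟨(N + 5) / 7, N - 1 - 6 * ((N + 5) / 7), by omega, by omega⟩)))))
  rcases hcase with rfl | rfl | rfl | rfl | rfl | rfl | ⟨k, e, he, rfl⟩
  · exact spec16_spec
  · exact spec17_spec
  · exact spec18_spec
  · exact spec23_spec
  · exact spec24_spec
  · exact spec30_spec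
  · exact generic_case k e he
end

section
/- For every integer N such that N ≥ 28 or N ∈ {13, 25, 26}, there exists a real polynomial g ∈ ℝ[x₁,x₂,x₃] with non-negative coefficients such that g(x₁,x₂,x₃) = 1 whenever x₁ + x₂ + x₃ = 1, every triple (a,b,c) ∈ ℕ³ in the support of g satisfies 5 ∣ a + b + 2c, and the support of g has exactly N elements. -/
open MvPolynomial
set_option maxRecDepth 4000

abbrev T3 := ℕ × ℕ × ℕ

noncomputable def toF (t : T3) : Fin 3 →₀ ℕ :=
  Finsupp.single 0 t.1 + Finsupp.single 1 t.2.1 + Finsupp.single 2 t.2.2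

@[simp] lemma toF_apply0 (t : T3) : toF t 0 = t.1 := by
  simp [toF, Finsupp.single_apply]
@[simp] lemma toF_apply1 (t : T3) : toF t 1 = t.2.1 := by
  simp [toF, Finsupp.single_apply]
@[simp] lemma toF_apply2 (t : T3) : toF t 2 = t.2.2 := by
  simp [toF, Finsupp.single_apply]

lemma toF_injective : Function.Injective toF := by
  intro s t h
  have h0 := DFunLike.congr_fun h 0
  have h1 := DFunLike.congr_fun h 1
  have h2 := DFunLike.congr_fun h 2
  simp at h0 h1 h2
  exact Prod.ext h0 (Prod.ext h1 h2)

noncomputable def toE : T3 ↪ (Fin 3 →₀ ℕ) := ⟨toF, toF_injective⟩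

lemma toF_add (s t : T3) : toF (s + t) = toF s + toF t := by
  simp only [toF, Prod.fst_add, Prod.snd_add, Finsupp.single_add]
  abel

lemma prod_toF (t : T3) (x : Fin 3 → ℝ) :
    (toF t).prod (fun i e => x i ^ e) = x 0 ^ t.1 * x 1 ^ t.2.1 * x 2 ^ t.2.2 := by
  rw [Finsupp.prod_fintype _ _ (fun i => pow_zero (x i))]
  rw [Fin.prod_univ_three]
  simp

-- support of a sum of polys with nonneg coeffs
lemma support_add_nonneg (p q : MvPolynomial (Fin 3) ℝ)
    (hp : ∀ α, 0 ≤ p.coeff α) (hq : ∀ α, 0 ≤ q.coeff α) :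
    (p + q).support = p.support ∪ q.support := by
  ext β
  simp only [MvPolynomial.mem_support_iff, Finset.mem_union, coeff_add]
  constructor
  · intro h
    by_contra hc
    push_neg at hc
    simp [hc.1, hc.2] at h
  · intro h
    rcases h with h | h
    · have : 0 < p.coeff β := lt_of_le_of_ne (hp β) (Ne.symm h)
      exact ne_of_gt (add_pos_of_pos_of_nonneg this (hq β))
    · have : 0 < q.coeff β := lt_of_le_of_ne (hq β) (Ne.symm h)
      exact ne_of_gt (add_pos_of_nonneg_of_pos (hp β) this)

noncomputable def mk (L : List (T3 × ℝ)) : MvPolynomial (Fin 3) ℝ :=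
  (L.map fun p => monomial (toF p.1) p.2).sum

@[simp] lemma mk_nil : mk [] = 0 := rfl
@[simp] lemma mk_cons (p : T3 × ℝ) (L : List (T3 × ℝ)) :
    mk (p :: L) = monomial (toF p.1) p.2 + mk L := rfl

lemma coeff_mk_nonneg (L : List (T3 × ℝ)) (h : ∀ p ∈ L, 0 ≤ p.2) (α : Fin 3 →₀ ℕ) :
    0 ≤ (mk L).coeff α := by
  induction L with
  | nil => simp
  | cons p L ih =>
    simp only [mk_cons, coeff_add, coeff_monomial]
    have h1 : 0 ≤ p.2 := h p (by simp)
    have h2 := ih (fun q hq => h q (by simp [hq]))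
    split <;> [positivity; simpa]

lemma support_mk (L : List (T3 × ℝ)) (h : ∀ p ∈ L, 0 < p.2) :
    (mk L).support = (L.map Prod.fst).toFinset.map toE := by
  induction L with
  | nil => simp
  | cons p L ih =>
    have h1 : (0:ℝ) < p.2 := h p (by simp)
    have hmono : ∀ α, 0 ≤ (monomial (toF p.1) p.2 : MvPolynomial (Fin 3) ℝ).coeff α := by
      intro α
      rw [coeff_monomial]
      split <;> [exact le_of_lt h1; rfl]
    rw [mk_cons, support_add_nonneg _ _ hmono
        (coeff_mk_nonneg L (fun q hq => le_of_lt (h q (by simp [hq])))),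
      ih (fun q hq => h q (by simp [hq])), support_monomial, if_neg (ne_of_gt h1)]
    rw [List.map_cons, List.toFinset_cons, Finset.map_insert, Finset.insert_eq]
    rfl

lemma eval_mk (L : List (T3 × ℝ)) (x : Fin 3 → ℝ) :
    eval x (mk L) = (L.map fun p => p.2 * x 0 ^ p.1.1 * x 1 ^ p.1.2.1 * x 2 ^ p.1.2.2).sum := by
  induction L with
  | nil => simp
  | cons p L ih =>
    rw [mk_cons, List.map_cons, List.sum_cons, map_add, eval_monomial, prod_toF, ih]
    ring_nf

def Lf : List (T3 × ℝ) :=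
  [((5,0,0),1), ((4,1,0),5), ((3,2,0),10), ((2,3,0),10), ((1,4,0),5), ((0,5,0),1),
   ((3,0,1),5), ((2,1,1),15), ((1,2,1),15), ((0,3,1),5),
   ((1,0,2),5), ((0,1,2),5), ((0,0,5),1)]

def Sf : Finset T3 := (Lf.map Prod.fst).toFinset

noncomputable def fpoly : MvPolynomial (Fin 3) ℝ := mk Lf

def Valid (g : MvPolynomial (Fin 3) ℝ) (A : Finset T3) : Prop :=
  (∀ α, 0 ≤ g.coeff α) ∧
  (∀ x₁ x₂ x₃ : ℝ, x₁ + x₂ + x₃ = 1 → eval ![x₁, x₂, x₃] g = 1) ∧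
  g.support = A.map toE ∧
  (∀ t ∈ A, 5 ∣ t.1 + t.2.1 + 2 * t.2.2)

lemma valid_f : Valid fpoly Sf := by
  refine ⟨?_, ?_, ?_, ?_⟩
  · exact coeff_mk_nonneg Lf (by norm_num [Lf])
  · intro x₁ x₂ x₃ hx
    rw [fpoly, eval_mk]
    have h3 : x₃ = 1 - x₁ - x₂ := by linarith
    subst h3
    simp [Lf]
    ring
  · exact support_mk Lf (by norm_num [Lf])
  · decide

lemma Lf_pos : ∀ p ∈ Lf, (0:ℝ) < p.2 := by norm_num [Lf]

lemma monomial_mul_mk (m : T3) (c : ℝ) (L : List (T3 × ℝ)) :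
    monomial (toF m) c * mk L = mk (L.map fun p => (m + p.1, c * p.2)) := by
  induction L with
  | nil => simp
  | cons p L ih =>
    simp only [mk_cons, List.map_cons, mul_add, ih, monomial_mul, toF_add]

def repSet (A : Finset T3) (m : T3) : Finset T3 :=
  A.erase m ∪ Sf.image (fun s => m + s)

lemma valid_replace {g : MvPolynomial (Fin 3) ℝ} {A : Finset T3} (hg : Valid g A)
    {m : T3} (hm : m ∈ A) :
    Valid (g - monomial (toF m) (g.coeff (toF m))
      + monomial (toF m) (g.coeff (toF m)) * fpoly) (repSet A m) := by
  obtain ⟨hpos, heval, hsupp, hdiv⟩ := hg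
  set c := g.coeff (toF m) with hc
  have hmem : toF m ∈ g.support := by
    rw [hsupp, Finset.mem_map]
    exact ⟨m, hm, rfl⟩
  have hcne : c ≠ 0 := by rwa [MvPolynomial.mem_support_iff] at hmem
  have hcpos : 0 < c := lt_of_le_of_ne (hpos _) (Ne.symm hcne)
  have hQ : monomial (toF m) c * fpoly = mk (Lf.map fun p => (m + p.1, c * p.2)) :=
    monomial_mul_mk m c Lf
  have hQpos : ∀ p ∈ Lf.map (fun p => (m + p.1, c * p.2)), (0:ℝ) < p.2 := by
    intro p hp
    rw [List.mem_map] at hp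
    obtain ⟨q, hq, rfl⟩ := hp
    exact mul_pos hcpos (Lf_pos q hq)
  have hPcoeff : ∀ α, (g - monomial (toF m) c).coeff α
      = if α = toF m then 0 else g.coeff α := by
    intro α
    rw [coeff_sub, coeff_monomial]
    split
    · rename_i h; split
      · rw [hc]; rw [h]; ring
      · rename_i h2; exact absurd h.symm h2
    · rename_i h; split
      · rename_i h2; exact absurd h2.symm h
      · ring
  have hPnonneg : ∀ α, 0 ≤ (g - monomial (toF m) c).coeff α := by
    intro α; rw [hPcoeff]; split
    · exact le_refl 0
    · exact hpos α
  have hPsupp : (g - monomial (toF m) c).support = (g.support).erase (toF m) := by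
    ext β
    rw [MvPolynomial.mem_support_iff, hPcoeff, Finset.mem_erase,
      MvPolynomial.mem_support_iff]
    split
    · rename_i h; simp [h]
    · rename_i h; simp [h]
  refine ⟨?_, ?_, ?_, ?_⟩
  · intro α
    rw [coeff_add]
    have := coeff_mk_nonneg _ (fun p hp => le_of_lt (hQpos p hp)) α
    rw [← hQ] at this
    exact add_nonneg (hPnonneg α) this
  · intro x₁ x₂ x₃ hx
    rw [map_add, map_sub, map_mul, heval _ _ _ hx, (valid_f.2.1) _ _ _ hx]
    ring
  · rw [support_add_nonneg _ _ hPnonneg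
      (by intro α; have := coeff_mk_nonneg _ (fun p hp => le_of_lt (hQpos p hp)) α
          rwa [← hQ] at this),
      hPsupp, hsupp, hQ, support_mk _ hQpos, repSet, Finset.map_union,
      show toF m = toE m from rfl, ← Finset.map_erase]
    congr 1
  · intro t ht
    rw [repSet, Finset.mem_union] at ht
    rcases ht with ht | ht
    · exact hdiv t (Finset.mem_of_mem_erase ht)
    · rw [Finset.mem_image] at ht
      obtain ⟨s, hs, rfl⟩ := ht
      have h1 := hdiv m hm
      have h2 : 5 ∣ s.1 + s.2.1 + 2 * s.2.2 := by
        revert hs; revert s; decide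
      simp only [Prod.fst_add, Prod.snd_add]
      omega

lemma valid_avg {g h : MvPolynomial (Fin 3) ℝ} {A B : Finset T3}
    (hg : Valid g A) (hh : Valid h B) :
    Valid (C (1/2 : ℝ) * (g + h)) (A ∪ B) := by
  obtain ⟨hg1, hg2, hg3, hg4⟩ := hg
  obtain ⟨hh1, hh2, hh3, hh4⟩ := hh
  have hsum : ∀ α, 0 ≤ (g + h).coeff α := by
    intro α; rw [coeff_add]; exact add_nonneg (hg1 α) (hh1 α)
  refine ⟨?_, ?_, ?_, ?_⟩
  · intro α
    rw [coeff_C_mul]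
    have := hsum α
    positivity
  · intro x₁ x₂ x₃ hx
    rw [map_mul, map_add, hg2 _ _ _ hx, hh2 _ _ _ hx, eval_C]
    norm_num
  · have hCsupp : (C (1/2 : ℝ) * (g + h)).support = (g + h).support := by
      ext β
      simp only [MvPolynomial.mem_support_iff, coeff_C_mul]
      constructor
      · intro hb hc; rw [hc, mul_zero] at hb; exact hb rfl
      · intro hb hc
        have : (g + h).coeff β = 0 := by
          field_simp at hc
          simpa using hc
        exact hb this
    rw [hCsupp, support_add_nonneg _ _ hg1 hh1, hg3, hh3, Finset.map_union]
  · intro t ht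
    rcases Finset.mem_union.mp ht with ht | ht
    · exact hg4 t ht
    · exact hh4 t ht

def deg (t : T3) : ℕ := t.1 + t.2.1 + 2 * t.2.2

def Reach (N : ℕ) : Prop := ∃ g A, Valid g A ∧ A.card = N

lemma Sf_deg : ∀ s ∈ Sf, 5 ≤ deg s := by decide

lemma card_Sf : Sf.card = 13 := by decide

lemma reach_step {N : ℕ} (h : Reach N) (hN : 1 ≤ N) : Reach (N + 12) := by
  obtain ⟨g, A, hg, hcard⟩ := h
  have hA : A.Nonempty := Finset.card_pos.mp (by omega)
  obtain ⟨m, hm, hmax⟩ := A.exists_max_image deg hA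
  refine ⟨_, _, valid_replace hg hm, ?_⟩
  have hdisj : Disjoint (A.erase m) (Sf.image (fun s => m + s)) := by
    rw [Finset.disjoint_right]
    intro t htim hter
    obtain ⟨s, hs, rfl⟩ := Finset.mem_image.mp htim
    have h1 : deg (m + s) ≤ deg m := hmax _ (Finset.mem_of_mem_erase hter)
    have h2 : 5 ≤ deg s := Sf_deg s hs
    simp only [deg, Prod.fst_add, Prod.snd_add] at h1 h2
    omega
  have hinj : Function.Injective (fun s : T3 => m + s) := fun a b hab => by
    simpa using hab
  rw [repSet, Finset.card_union_of_disjoint hdisj,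
    Finset.card_image_of_injective _ hinj, Finset.card_erase_of_mem hm, hcard, card_Sf]
  omega

lemma reach_of_valid {g A N} (h : Valid g A) (hc : A.card = N) : Reach N := ⟨g, A, h, hc⟩

lemma reach13 : Reach 13 := reach_of_valid valid_f card_Sf

lemma reach25 : Reach 25 :=
  reach_of_valid (valid_replace valid_f (show ((0:ℕ),(0:ℕ),(5:ℕ)) ∈ Sf by decide)) (by decide)

lemma reach26 : Reach 26 :=
  reach_of_valid (valid_avg valid_f
    (valid_replace valid_f (show ((0:ℕ),(0:ℕ),(5:ℕ)) ∈ Sf by decide))) (by decide)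

lemma reach_base : ∀ N, 28 ≤ N → N ≤ 39 → Reach N := by
  have v5 := valid_replace valid_f (show ((0:ℕ),(0:ℕ),(5:ℕ)) ∈ Sf by decide)
  have h012 := valid_replace valid_f (show ((0:ℕ),(1:ℕ),(2:ℕ)) ∈ Sf by decide)
  have h031 := valid_replace valid_f (show ((0:ℕ),(3:ℕ),(1:ℕ)) ∈ Sf by decide)
  have r28 := valid_replace h012 (show ((1:ℕ),(0:ℕ),(2:ℕ)) ∈ repSet Sf (0,1,2) by decide)
  have r31 := valid_replace h012 (show ((0:ℕ),(3:ℕ),(1:ℕ)) ∈ repSet Sf (0,1,2) by decide)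
  have r33 := valid_replace h012 (show ((3:ℕ),(0:ℕ),(1:ℕ)) ∈ repSet Sf (0,1,2) by decide)
  have r35 := valid_replace h012 (show ((0:ℕ),(5:ℕ),(0:ℕ)) ∈ repSet Sf (0,1,2) by decide)
  have r36 := valid_replace v5 (show ((0:ℕ),(1:ℕ),(2:ℕ)) ∈ repSet Sf (0,0,5) by decide)
  have r37 := valid_replace v5 (show ((0:ℕ),(0:ℕ),(10:ℕ)) ∈ repSet Sf (0,0,5) by decide)
  have r39' := valid_replace h031 (show ((3:ℕ),(0:ℕ),(1:ℕ)) ∈ repSet Sf (0,3,1) by decide)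
  intro N h1 h2
  interval_cases N
  · exact reach_of_valid r28 (by decide)
  · exact reach_of_valid (valid_avg h012 r28) (by decide)
  · exact reach_of_valid (valid_avg valid_f r28) (by decide)
  · exact reach_of_valid r31 (by decide)
  · exact reach_of_valid (valid_avg h012 r31) (by decide)
  · exact reach_of_valid r33 (by decide)
  · exact reach_of_valid (valid_avg h012 r33) (by decide)
  · exact reach_of_valid r35 (by decide)
  · exact reach_of_valid r36 (by decide)
  · exact reach_of_valid r37 (by decide)
  · exact reach_of_valid (valid_avg valid_f r36) (by decide)
  · exact reach_of_valid (valid_avg h012 r39') (by decide)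

lemma reach_ge28 : ∀ N, 28 ≤ N → Reach N := by
  intro N
  induction N using Nat.strong_induction_on with
  | _ N ih =>
    intro hN
    by_cases h : N ≤ 39
    · exact reach_base N hN h
    · push_neg at h
      have h1 : 28 ≤ N - 12 := by omega
      have h2 : N - 12 < N := by omega
      have := reach_step (ih _ h2 h1) (by omega)
      have he : N - 12 + 12 = N := by omega
      rwa [he] at this

/-- For every `N` with `N ≥ 28` or `N ∈ {13, 25, 26}` there is a polynomial in
three variables with non-negative coefficients, equal to `1` on
`x₁ + x₂ + x₃ = 1`, invariant under `⟨ωI₂ ⊕ ω²I₁⟩` for `ω` a primitive fifth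
root of unity (`5 ∣ a + b + 2c` on the support), with support of cardinality
exactly `N`. -/
theorem stmt_12 (N : ℕ) (hN : 28 ≤ N ∨ N = 13 ∨ N = 25 ∨ N = 26) :
    ∃ g : MvPolynomial (Fin 3) ℝ,
      (∀ α, 0 ≤ g.coeff α) ∧
      (∀ x₁ x₂ x₃ : ℝ, x₁ + x₂ + x₃ = 1 → eval ![x₁, x₂, x₃] g = 1) ∧
      (∀ α ∈ g.support, 5 ∣ α 0 + α 1 + 2 * α 2) ∧
      g.support.card = N := by
  have hr : Reach N := by
    rcases hN with h | h | h | h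
    · exact reach_ge28 N h
    · exact h ▸ reach13
    · exact h ▸ reach25
    · exact h ▸ reach26
  obtain ⟨g, A, ⟨h1, h2, h3, h4⟩, hc⟩ := hr
  refine ⟨g, h1, h2, ?_, ?_⟩
  · intro α hα
    rw [h3, Finset.mem_map] at hα
    obtain ⟨t, ht, rfl⟩ := hα
    have := h4 t ht
    simpa [toE] using this
  · rw [h3, Finset.card_map, hc]
end

section
/- Let p ≥ 3 be an odd integer and set M = (p+1)(p+3)/4 + 1. For every integer N ≥ M² − 2M + 2 there exists a real polynomial g ∈ ℝ[x₁,x₂,x₃] with non-negative coefficients such that g(x₁,x₂,x₃) = 1 whenever x₁ + x₂ + x₃ = 1, every triple (a,b,c) ∈ ℕ³ in the support of g satisfies p ∣ a + b + 2c, and the support of g has exactly N elements. -/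
open Finset MvPolynomial

/-- Coefficients of the Lucas-type polynomials `Gₙ(u,v) = αⁿ + βⁿ` where
`α + β = u`, `αβ = -v`: `Gₙ = ∑ₖ cc n k · u^(n-2k) v^k`. -/
def cc : ℕ → ℕ → ℕ
  | 0, 0 => 2
  | 0, _+1 => 0
  | 1, 0 => 1
  | 1, _+1 => 0
  | n+2, 0 => cc (n+1) 0
  | n+2, k+1 => cc (n+1) (k+1) + cc n k

lemma cc_zero : ∀ n k, n < 2*k → cc n k = 0
  | 0, 0, h => by omega
  | 1, 0, h => by omega
  | _+2, 0, h => by omega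
  | 0, _+1, _ => rfl
  | 1, _+1, _ => rfl
  | n+2, k+1, h => by
      rw [show cc (n+2) (k+1) = cc (n+1) (k+1) + cc n k from rfl,
        cc_zero (n+1) (k+1) (by omega), cc_zero n k (by omega)]

lemma cc_pos : ∀ n k, 2*k ≤ n → 0 < cc n k
  | 0, 0, _ => by norm_num [cc]
  | 1, 0, _ => by norm_num [cc]
  | n+2, 0, _ => by
      rw [show cc (n+2) 0 = cc (n+1) 0 from rfl]
      exact cc_pos (n+1) 0 (by omega)
  | 0, k+1, h => by omega
  | 1, k+1, h => by omega
  | n+2, k+1, h => by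
      rw [show cc (n+2) (k+1) = cc (n+1) (k+1) + cc n k from rfl]
      have := cc_pos n k (by omega)
      omega

lemma cc_sum : ∀ n : ℕ, ∀ u v : ℝ, u + v = 1 →
    ∑ k ∈ range (n+1), (cc n k : ℝ) * u ^ (n - 2*k) * v ^ k = 1 + (-v) ^ n
  | 0, u, v, h => by norm_num [cc]
  | 1, u, v, h => by
      rw [Finset.sum_range_succ, Finset.sum_range_one]
      norm_num [cc]
      linarith
  | n+2, u, v, h => by
      have key : ∑ k ∈ range (n+2+1), (cc (n+2) k : ℝ) * u ^ (n+2 - 2*k) * v ^ k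
          = u * (∑ k ∈ range (n+1+1), (cc (n+1) k : ℝ) * u ^ (n+1 - 2*k) * v ^ k)
            + v * (∑ k ∈ range (n+1), (cc n k : ℝ) * u ^ (n - 2*k) * v ^ k) := by
        rw [Finset.sum_range_succ' (fun k => (cc (n+2) k : ℝ) * u ^ (n+2 - 2*k) * v ^ k) (n+2),
            Finset.sum_range_succ' (fun k => (cc (n+1) k : ℝ) * u ^ (n+1 - 2*k) * v ^ k) (n+1)]
        have e1 : ∀ k ∈ range (n+2), (cc (n+2) (k+1) : ℝ) * u ^ (n+2 - 2*(k+1)) * v ^ (k+1)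
            = (cc (n+1) (k+1) : ℝ) * u ^ (n - 2*k) * v ^ (k+1)
              + (cc n k : ℝ) * u ^ (n - 2*k) * v ^ k * v := by
          intro k _
          rw [show cc (n+2) (k+1) = cc (n+1) (k+1) + cc n k from rfl,
            show n+2 - 2*(k+1) = n - 2*k by omega]
          push_cast
          ring
        have e2 : ∑ k ∈ range (n+2), (cc n k : ℝ) * u ^ (n - 2*k) * v ^ k * v
            = v * ∑ k ∈ range (n+1), (cc n k : ℝ) * u ^ (n - 2*k) * v ^ k := by
          rw [Finset.sum_range_succ, cc_zero n (n+1) (by omega), Finset.mul_sum]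
          push_cast
          rw [zero_mul, zero_mul, zero_mul, add_zero]
          exact Finset.sum_congr rfl fun k _ => by ring
        have e3 : ∑ k ∈ range (n+2), (cc (n+1) (k+1) : ℝ) * u ^ (n - 2*k) * v ^ (k+1)
            = u * ∑ k ∈ range (n+1), (cc (n+1) (k+1) : ℝ) * u ^ (n+1 - 2*(k+1)) * v ^ (k+1) := by
          rw [Finset.sum_range_succ, cc_zero (n+1) (n+2) (by omega), Finset.mul_sum]
          push_cast
          rw [zero_mul, zero_mul, add_zero]
          refine Finset.sum_congr rfl fun k _ => ?_
          by_cases hk : 2*k + 1 ≤ n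
          · rw [show n - 2*k = (n+1 - 2*(k+1)) + 1 by omega, pow_succ]
            ring
          · rw [cc_zero (n+1) (k+1) (by omega)]
            norm_num
        rw [Finset.sum_congr rfl e1, Finset.sum_add_distrib, e2, e3,
          show cc (n+2) 0 = cc (n+1) 0 from rfl, mul_add, Finset.mul_sum]
        simp only [Nat.mul_zero, Nat.sub_zero, pow_zero, mul_one]
        ring
      rw [key, cc_sum (n+1) u v h, cc_sum n u v h]
      have hu : u = 1 - v := by linarith
      subst hu
      ring

lemma support_sum_monomial {ι : Type*} (s : Finset ι) (e : ι → (Fin 3 →₀ ℕ)) (w : ι → ℝ)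
    (he : Set.InjOn e s) (hw : ∀ i ∈ s, w i ≠ 0) :
    (∑ i ∈ s, monomial (e i) (w i)).support = s.image e := by
  ext α
  simp only [mem_support_iff, Finset.mem_image, MvPolynomial.coeff_sum,
    MvPolynomial.coeff_monomial]
  constructor
  · intro hne
    by_contra hc
    push_neg at hc
    exact hne (Finset.sum_eq_zero fun i hi => if_neg fun hei => hc i hi hei)
  · rintro ⟨i, hi, rfl⟩
    rw [Finset.sum_eq_single_of_mem i hi (fun j hj hji => if_neg fun h => hji (he hj hi h)),
      if_pos rfl]
    exact hw i hi

noncomputable def eMap (p : ℕ) : (ℕ × Σ _ : ℕ, ℕ) ⊕ ℕ → (Fin 3 →₀ ℕ) :=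
  fun ι => Finsupp.equivFunOnFinite.symm (Sum.elim
    (fun x => ![x.2.2, p - 2*x.2.1 - x.2.2, x.1*p + x.2.1])
    (fun i => ![0, 0, i*p]) ι)

lemma eMap_inl (p j k a : ℕ) (i : Fin 3) :
    (eMap p (Sum.inl (j, ⟨k, a⟩)) : Fin 3 →₀ ℕ) i = ![a, p - 2*k - a, j*p + k] i := by
  simp [eMap]

lemma eMap_inr (p n : ℕ) (i : Fin 3) :
    (eMap p (Sum.inr n) : Fin 3 →₀ ℕ) i = ![0, 0, n*p] i := by
  simp [eMap]

def IS (p m r t : ℕ) : Finset ((ℕ × Σ _ : ℕ, ℕ) ⊕ ℕ) :=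
  ((range r) ×ˢ ((range (m+1)).sigma fun k => range (p - 2*k + 1))).disjSum (insert r (range t))

lemma mem_IS_inl {p m r t j k a : ℕ} (h : Sum.inl (j, ⟨k, a⟩) ∈ IS p m r t) :
    j < r ∧ k ≤ m ∧ a ≤ p - 2*k := by
  rw [IS, Finset.inl_mem_disjSum, Finset.mem_product, Finset.mem_sigma] at h
  simp only [mem_range] at h
  omega

lemma eMap_injOn (p m r t : ℕ) (hm : p = 2*m+1) :
    Set.InjOn (eMap p) (IS p m r t) := by
  have hp : 0 < p := by omega
  intro ι hι κ hκ h
  have hcomp : ∀ i : Fin 3, (eMap p ι) i = (eMap p κ) i := fun i => by rw [h]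
  match ι, κ with
  | Sum.inl (j, ⟨k, a⟩), Sum.inl (j', ⟨k', a'⟩) =>
    obtain ⟨hj, hk, ha⟩ := mem_IS_inl hι
    obtain ⟨hj', hk', ha'⟩ := mem_IS_inl hκ
    have h0 := hcomp 0; have h1 := hcomp 1; have h2 := hcomp 2
    rw [eMap_inl, eMap_inl] at h0 h1 h2
    simp only [Matrix.cons_val_zero] at h0
    simp only [Matrix.cons_val_one, Matrix.head_cons] at h1
    simp at h2
    have hkk : k = k' := by
      have e1 := congrArg (· % p) h2
      simp only [add_comm _ k, add_comm _ k'] at e1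
      rwa [Nat.add_mul_mod_self_right, Nat.add_mul_mod_self_right,
        Nat.mod_eq_of_lt (by omega), Nat.mod_eq_of_lt (by omega)] at e1
    have hjj : j = j' := by
      have : j * p = j' * p := by omega
      exact Nat.eq_of_mul_eq_mul_right hp this
    subst hkk; subst hjj; subst h0; rfl
  | Sum.inl (j, ⟨k, a⟩), Sum.inr i =>
    obtain ⟨hj, hk, ha⟩ := mem_IS_inl hι
    have h0 := hcomp 0; have h1 := hcomp 1
    rw [eMap_inl, eMap_inr] at h0 h1
    simp only [Matrix.cons_val_zero] at h0
    simp only [Matrix.cons_val_one, Matrix.head_cons, Matrix.cons_val_zero] at h1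
    omega
  | Sum.inr i, Sum.inl (j, ⟨k, a⟩) =>
    obtain ⟨hj, hk, ha⟩ := mem_IS_inl hκ
    have h0 := hcomp 0; have h1 := hcomp 1
    rw [eMap_inr, eMap_inl] at h0 h1
    simp only [Matrix.cons_val_zero] at h0
    simp only [Matrix.cons_val_one, Matrix.head_cons, Matrix.cons_val_zero] at h1
    omega
  | Sum.inr i, Sum.inr i' =>
    have h2 := hcomp 2
    rw [eMap_inr, eMap_inr] at h2
    simp at h2
    rcases h2 with h2 | h2
    · subst h2; rfl
    · omega

def wNum (p : ℕ) (E : Finset ℕ) : (ℕ × Σ _ : ℕ, ℕ) ⊕ ℕ → ℕ :=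
  Sum.elim (fun x => (E.filter fun i => x.1 < i).card * cc p x.2.1 * (p - 2*x.2.1).choose x.2.2)
    (fun _ => 1)

lemma sum2 (m : ℕ) : ∑ j ∈ range (m+1), (2*j+2) = (m+1)*(m+2) := by
  induction m with
  | zero => simp
  | succ n ih => rw [Finset.sum_range_succ, ih]; ring

lemma sum_block (m p : ℕ) (hm : p = 2*m+1) :
    ∑ k ∈ range (m+1), (p - 2*k + 1) = (m+1)*(m+2) := by
  have h1 : ∀ k ∈ range (m+1), p - 2*k + 1 = (fun j => 2*j+2) (m+1-1-k) := by
    intro k hk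
    simp only [mem_range] at hk
    simp only
    omega
  rw [Finset.sum_congr rfl h1, Finset.sum_range_reflect (fun j => 2*j+2) (m+1), sum2]

theorem aux (p m r t : ℕ) (hm : p = 2*m+1) (htr : t < r) :
    ∃ g : MvPolynomial (Fin 3) ℝ,
      (∀ α, 0 ≤ g.coeff α) ∧
      (∀ x₁ x₂ x₃ : ℝ, x₁ + x₂ + x₃ = 1 → eval ![x₁, x₂, x₃] g = 1) ∧
      (∀ α ∈ g.support, p ∣ α 0 + α 1 + 2 * α 2) ∧
      g.support.card = r * ((m+1)*(m+2)) + t + 1 := by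
  set E : Finset ℕ := insert r (range t) with hE
  have hwpos : ∀ ι ∈ IS p m r t, 0 < wNum p E ι := by
    intro ι hι
    match ι with
    | Sum.inl (j, ⟨k, a⟩) =>
      obtain ⟨hj, hk, ha⟩ := mem_IS_inl hι
      refine Nat.mul_pos (Nat.mul_pos (Finset.card_pos.2
        ⟨r, Finset.mem_filter.2 ⟨Finset.mem_insert_self _ _, hj⟩⟩) (cc_pos p k (by omega)))
        (Nat.choose_pos ha)
    | Sum.inr i => norm_num [wNum]
  have ht1 : (0:ℝ) < (t:ℝ) + 1 := by positivity
  have hwne : ∀ ι ∈ IS p m r t, ((wNum p E ι : ℝ) / (t+1)) ≠ 0 := by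
    intro ι hι
    have := hwpos ι hι
    positivity
  have hsupp : (∑ ι ∈ IS p m r t, monomial (eMap p ι) ((wNum p E ι : ℝ) / (t+1))).support
      = (IS p m r t).image (eMap p) :=
    support_sum_monomial _ _ _ (eMap_injOn p m r t hm) hwne
  refine ⟨∑ ι ∈ IS p m r t, monomial (eMap p ι) ((wNum p E ι : ℝ) / (t+1)), ?_, ?_, ?_, ?_⟩
  · -- coefficients nonneg
    intro α
    rw [MvPolynomial.coeff_sum]
    refine Finset.sum_nonneg fun ι _ => ?_
    rw [MvPolynomial.coeff_monomial]
    split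
    · positivity
    · exact le_refl 0
  · -- evaluation
    intro x₁ x₂ x₃ hx
    have hadd : x₁ + x₂ = 1 - x₃ := by linarith
    have hprod : ∀ ι, ((eMap p ι).prod fun n e => (![x₁, x₂, x₃] : Fin 3 → ℝ) n ^ e)
        = Sum.elim (fun x : ℕ × Σ _ : ℕ, ℕ =>
            x₁ ^ x.2.2 * x₂ ^ (p - 2*x.2.1 - x.2.2) * x₃ ^ (x.1*p + x.2.1))
          (fun i => x₃ ^ (i*p)) ι := by
      intro ι
      rw [Finsupp.prod_fintype _ _ (fun i => pow_zero _), Fin.prod_univ_three]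
      match ι with
      | Sum.inl (j, ⟨k, a⟩) =>
        rw [eMap_inl, eMap_inl, eMap_inl]
        simp
      | Sum.inr i =>
        rw [eMap_inr, eMap_inr, eMap_inr]
        simp
    rw [map_sum]
    rw [Finset.sum_congr rfl (fun ι _ => by rw [eval_monomial, hprod ι])]
    rw [IS, Finset.sum_disjSum]
    simp only [Sum.elim_inl, Sum.elim_inr, wNum]
    rw [Finset.sum_product]
    -- block part
    have hbin : ∀ k : ℕ, ∑ a ∈ range (p-2*k+1), ((p-2*k).choose a : ℝ) * (x₁^a * x₂^(p-2*k-a))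
        = (1-x₃)^(p-2*k) := by
      intro k
      rw [← hadd, add_pow]
      exact Finset.sum_congr rfl fun a ha => by ring
    have hks : ∑ k ∈ range (m+1), (cc p k : ℝ) * (1-x₃)^(p-2*k) * x₃^k = 1 - x₃^p := by
      rw [Finset.sum_subset (Finset.range_subset_range.2 (by omega) : range (m+1) ⊆ range (p+1))
        (fun k hk hk' => ?_)]
      · rw [cc_sum p (1-x₃) x₃ (by ring), Odd.neg_pow ⟨m, by omega⟩]
        ring
      · rw [cc_zero p k (by simp only [mem_range] at hk hk' ⊢; omega)]
        simp
    have hblock : ∀ j ∈ range r,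
        (∑ y ∈ (range (m+1)).sigma fun k => range (p - 2*k + 1),
          (((E.filter fun i => j < i).card * cc p y.1 * (p - 2*y.1).choose y.2 : ℕ) : ℝ) / (t+1)
            * (x₁ ^ y.2 * x₂ ^ (p - 2*y.1 - y.2) * x₃ ^ (j*p + y.1)))
        = ((E.filter fun i => j < i).card : ℝ) / (t+1) * (x₃^(j*p) - x₃^((j+1)*p)) := by
      intro j _
      rw [Finset.sum_sigma]
      have hstep : ∀ k ∈ range (m+1),
          (∑ a ∈ range (p - 2*k + 1),
            (((E.filter fun i => j < i).card * cc p k * (p - 2*k).choose a : ℕ) : ℝ) / (t+1)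
              * (x₁ ^ a * x₂ ^ (p - 2*k - a) * x₃ ^ (j*p + k)))
          = ((E.filter fun i => j < i).card : ℝ) / (t+1) * x₃^(j*p)
              * ((cc p k : ℝ) * (1-x₃)^(p-2*k) * x₃^k) := by
        intro k _
        rw [← hbin k]
        simp only [Finset.mul_sum, Finset.sum_mul]
        refine Finset.sum_congr rfl fun a _ => ?_
        rw [pow_add]
        push_cast
        ring
      rw [Finset.sum_congr rfl hstep, ← Finset.mul_sum, hks]
      have : x₃^((j+1)*p) = x₃^(j*p) * x₃^p := by
        rw [← pow_add]
        congr 1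
        ring
      rw [this]
      ring
    rw [Finset.sum_congr rfl hblock]
    -- telescope
    have hcard : ∀ j : ℕ, ((E.filter fun i => j < i).card : ℝ)
        = ∑ i ∈ E, (if j < i then (1:ℝ) else 0) := by
      intro j
      rw [Finset.card_filter]
      push_cast
      rfl
    have htel : ∑ j ∈ range r, ((E.filter fun i => j < i).card : ℝ) / (t+1)
          * (x₃^(j*p) - x₃^((j+1)*p))
        = ∑ i ∈ E, (1 - x₃^(i*p)) / (t+1) := by
      have h1 : ∀ j ∈ range r, ((E.filter fun i => j < i).card : ℝ) / (t+1)
            * (x₃^(j*p) - x₃^((j+1)*p))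
          = ∑ i ∈ E, (if j < i then (x₃^(j*p) - x₃^((j+1)*p)) / (t+1) else 0) := by
        intro j _
        rw [hcard, Finset.sum_div, Finset.sum_mul]
        refine Finset.sum_congr rfl fun i _ => ?_
        split
        · ring
        · ring
      rw [Finset.sum_congr rfl h1, Finset.sum_comm]
      refine Finset.sum_congr rfl fun i hi => ?_
      have hir : i ≤ r := by
        rw [hE, Finset.mem_insert] at hi
        simp only [mem_range] at hi
        omega
      have h2 : ∑ j ∈ range r, (if j < i then (x₃^(j*p) - x₃^((j+1)*p)) / (t+1) else 0)
          = ∑ j ∈ range i, (x₃^(j*p) - x₃^((j+1)*p)) / (t+1) := by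
        rw [← Finset.sum_filter]
        congr 1
        ext j
        simp only [Finset.mem_filter, mem_range]
        omega
      rw [h2, ← Finset.sum_div]
      have h3 : ∑ j ∈ range i, (x₃^(j*p) - x₃^((j+1)*p))
          = (fun n => x₃^(n*p)) 0 - (fun n => x₃^(n*p)) i :=
        Finset.sum_range_sub' (fun n => x₃^(n*p)) i
      rw [h3]
      norm_num
    simp only [Nat.cast_one]
    rw [htel, ← Finset.sum_add_distrib]
    have h4 : ∀ i ∈ E, (1 - x₃^(i*p)) / (t+1) + (1:ℝ)/(t+1) * x₃^(i*p) = 1/(t+1) := by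
      intro i _
      field_simp
      ring
    rw [Finset.sum_congr rfl h4, Finset.sum_const]
    have hcardE : E.card = t + 1 := by
      rw [hE, Finset.card_insert_of_notMem (by simp only [mem_range]; omega),
        Finset.card_range]
    rw [hcardE]
    rw [nsmul_eq_mul]
    push_cast
    field_simp
  · -- divisibility
    intro α hα
    rw [hsupp, Finset.mem_image] at hα
    obtain ⟨ι, hι, rfl⟩ := hα
    match ι with
    | Sum.inl (j, ⟨k, a⟩) =>
      obtain ⟨hj, hk, ha⟩ := mem_IS_inl hι
      have c0 : (eMap p (Sum.inl (j, ⟨k,a⟩)) : Fin 3 →₀ ℕ) 0 = a := by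
        rw [eMap_inl]; simp
      have c1 : (eMap p (Sum.inl (j, ⟨k,a⟩)) : Fin 3 →₀ ℕ) 1 = p - 2*k - a := by
        rw [eMap_inl]; simp
      have c2 : (eMap p (Sum.inl (j, ⟨k,a⟩)) : Fin 3 →₀ ℕ) 2 = j*p + k := by
        rw [eMap_inl]; simp
      rw [c0, c1, c2]
      refine ⟨1 + 2*j, ?_⟩
      have h2k : 2*k ≤ p := by omega
      zify [ha, h2k]
      ring
    | Sum.inr i =>
      have c0 : (eMap p (Sum.inr i) : Fin 3 →₀ ℕ) 0 = 0 := by rw [eMap_inr]; simp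
      have c1 : (eMap p (Sum.inr i) : Fin 3 →₀ ℕ) 1 = 0 := by rw [eMap_inr]; simp
      have c2 : (eMap p (Sum.inr i) : Fin 3 →₀ ℕ) 2 = i*p := by rw [eMap_inr]; simp
      rw [c0, c1, c2]
      exact ⟨2*i, by ring⟩
  · -- cardinality
    rw [hsupp, Finset.card_image_of_injOn (eMap_injOn p m r t hm), IS,
      Finset.card_disjSum, Finset.card_product, Finset.card_sigma]
    simp only [Finset.card_range]
    rw [sum_block m p hm]
    have hcardE : (insert r (range t)).card = t + 1 := by
      rw [Finset.card_insert_of_notMem (by simp only [mem_range]; omega),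
        Finset.card_range]
    rw [hcardE]
    ring

/-- Gap termination for `⟨ωI₂ ⊕ ω²I₁⟩`, `ω` a primitive `p`-th root of unity
(`p` odd): with `M = (p+1)(p+3)/4 + 1` the rank of `f_{p,2}(x₁+x₂, x₃)`, every
`N ≥ M² − 2M + 2` is realized as the rank of an invariant polynomial with
non-negative coefficients equal to `1` on the hyperplane `x₁ + x₂ + x₃ = 1`. -/
theorem stmt_14 (p : ℕ) (hp : 3 ≤ p) (hodd : Odd p) (N : ℕ)
    (hN : ((p + 1) * (p + 3) / 4 + 1) ^ 2 - 2 * ((p + 1) * (p + 3) / 4 + 1) + 2 ≤ N) :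
    ∃ g : MvPolynomial (Fin 3) ℝ,
      (∀ α, 0 ≤ g.coeff α) ∧
      (∀ x₁ x₂ x₃ : ℝ, x₁ + x₂ + x₃ = 1 → eval ![x₁, x₂, x₃] g = 1) ∧
      (∀ α ∈ g.support, p ∣ α 0 + α 1 + 2 * α 2) ∧
      g.support.card = N := by
  obtain ⟨m, hm⟩ := hodd
  have hm' : p = 2*m+1 := by omega
  have hq4 : (p+1)*(p+3)/4 = (m+1)*(m+2) := by
    have h4 : (p+1)*(p+3) = 4*((m+1)*(m+2)) := by subst hm'; ring
    rw [h4, Nat.mul_div_cancel_left _ (by norm_num : 0 < 4)]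
  rw [hq4] at hN
  set q := (m+1)*(m+2) with hq
  have hq0 : 0 < q := by positivity
  have hN' : q*q + 1 ≤ N := by
    have hsq : (q+1)^2 = q*q + 2*q + 1 := by ring
    omega
  have hqr : q ≤ (N-1)/q := (Nat.le_div_iff_mul_le hq0).2 (by omega)
  have htq : (N-1) % q < q := Nat.mod_lt _ hq0
  obtain ⟨g, h1, h2, h3, h4⟩ := aux p m ((N-1)/q) ((N-1) % q) hm' (by omega)
  refine ⟨g, h1, h2, h3, ?_⟩
  rw [h4, ← hq]
  have hdm := Nat.div_add_mod (N-1) q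
  rw [Nat.mul_comm]
  omega
end

section
/- Let p ≥ 3 be an odd integer and set M = (p+1)(p+3)/8 + p + 1. For every integer N ≥ M² − 2M + 2 there exists a real polynomial g ∈ ℝ[x₁,x₂,x₃] with non-negative coefficients such that g(x₁,x₂,x₃) = 1 whenever x₁ + x₂ + x₃ = 1, every triple (a,b,c) ∈ ℕ³ in the support of g satisfies p ∣ a + 2b + 2c, and the support of g has exactly N elements. -/
open MvPolynomial Finsupp

noncomputable section
namespace Stmt15

lemma f01 : ((0:Fin 3) = 1) = False := by decide
lemma f02 : ((0:Fin 3) = 2) = False := by decide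
lemma f10 : ((1:Fin 3) = 0) = False := by decide
lemma f12 : ((1:Fin 3) = 2) = False := by decide
lemma f20 : ((2:Fin 3) = 0) = False := by decide
lemma f21 : ((2:Fin 3) = 1) = False := by decide

/-- Lucas-type coefficients. -/
def cc : ℕ → ℕ → ℕ
  | 0, 0 => 2
  | 0, _+1 => 0
  | 1, 0 => 1
  | 1, _+1 => 0
  | (n+2), 0 => cc (n+1) 0
  | (n+2), (k+1) => cc (n+1) (k+1) + cc n k

lemma cc_ss (n k : ℕ) : cc (n+2) (k+1) = cc (n+1) (k+1) + cc n k := by rw [cc]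
lemma cc_s0 (n : ℕ) : cc (n+2) 0 = cc (n+1) 0 := by rw [cc]

lemma cc_pos : ∀ n k, 2 * k ≤ n → 0 < cc n k
  | 0, 0, _ => by simp [cc]
  | 1, 0, _ => by simp [cc]
  | (n+2), 0, _ => by rw [cc_s0]; exact cc_pos (n+1) 0 (by omega)
  | (n+2), (k+1), h => by
      rw [cc_ss]
      have := cc_pos n k (by omega)
      omega

lemma cc_eq_zero : ∀ n k, n < 2 * k → cc n k = 0
  | 0, (k+1), _ => by simp [cc]
  | 1, (k+1), _ => by simp [cc]
  | (n+2), (k+1), h => by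
      rw [cc_ss]
      rw [cc_eq_zero (n+1) (k+1) (by omega), cc_eq_zero n k (by omega)]

lemma cc_one : ∀ n, 1 ≤ n → cc n 0 = 1
  | 1, _ => by simp [cc]
  | (n+2), _ => by rw [cc_s0]; exact cc_one (n+1) (by omega)

/-- The Lucas-type polynomial sequence `V_n(x₁, x₂+x₃)`. -/
def Vp : ℕ → MvPolynomial (Fin 3) ℝ
  | 0 => C 2
  | 1 => X 0
  | (n+2) => X 0 * Vp (n+1) + (X 1 + X 2) * Vp n

lemma eval_Vp (x y z : ℝ) (h : x + y + z = 1) :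
    ∀ n, eval ![x, y, z] (Vp n) = 1 + (x - 1) ^ n
  | 0 => by simp [Vp]; norm_num
  | 1 => by simp [Vp]
  | (n+2) => by
      rw [Vp]
      simp only [map_add, map_mul, eval_X, eval_Vp x y z h (n+1), eval_Vp x y z h n]
      have hyz : y + z = 1 - x := by linarith
      show x * _ + (![x,y,z] 1 + ![x,y,z] 2) * _ = _
      simp only [Matrix.cons_val_one, Matrix.head_cons, Matrix.cons_val_two, Matrix.tail_cons, Matrix.cons_val_zero]
      rw [hyz]
      ring

lemma fin3_eq_iff (α β : Fin 3 →₀ ℕ) : α = β ↔ α 0 = β 0 ∧ α 1 = β 1 ∧ α 2 = β 2 := by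
  constructor
  · rintro rfl; exact ⟨rfl, rfl, rfl⟩
  · rintro ⟨h0, h1, h2⟩
    apply Finsupp.ext
    intro i
    fin_cases i <;> assumption

lemma sub_single_apply (α : Fin 3 →₀ ℕ) (i j : Fin 3) (m : ℕ) :
    (α - Finsupp.single i m) j = α j - Finsupp.single i m j := by
  simp [Finsupp.tsub_apply]

/-- arithmetic core of the induction step for `coeff_Vp` -/
lemma step_eq (n a b c : ℕ) :
    (if a = 0 then 0 else (if (a-1) + 2*(b+c) = n+1 then (cc (n+1) (b+c) * (b+c).choose b : ℝ) else 0))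
    + ((if b = 0 then 0 else (if a + 2*((b-1)+c) = n then (cc n ((b-1)+c) * ((b-1)+c).choose (b-1) : ℝ) else 0))
    + (if c = 0 then 0 else (if a + 2*(b+(c-1)) = n then (cc n (b+(c-1)) * (b+(c-1)).choose b : ℝ) else 0)))
    = if a + 2*(b+c) = n+2 then (cc (n+2) (b+c) * (b+c).choose b : ℝ) else 0 := by
  rcases a with _ | a <;> rcases b with _ | b <;> rcases c with _ | c <;>
    simp only [Nat.succ_ne_zero, Nat.add_sub_cancel, ne_eq, not_true_eq_false, not_false_eq_true,
      if_true, if_false, Nat.zero_add, Nat.add_zero, ite_true, ite_false, reduceIte] <;>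
    split_ifs <;> (try (exfalso; omega)) <;> push_cast <;> norm_num
  · rw [cc_ss, cc_eq_zero (n+1) _ (by omega)]; omega
  · rw [cc_ss, cc_eq_zero (n+1) _ (by omega)]; omega
  · norm_cast
    have e1 : b + (c+1) = b+1+c := by omega
    rw [e1, show b+1+(c+1) = (b+1+c)+1 from rfl, cc_ss, Nat.choose_succ_succ,
      cc_eq_zero (n+1) _ (by omega)]
    ring
  · rw [cc_s0]
  · rw [cc_ss]; push_cast; ring
  · rw [cc_ss]; push_cast; ring
  · norm_cast
    have e1 : b + (c+1) = b+1+c := by omega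
    rw [e1, show b+1+(c+1) = (b+1+c)+1 from rfl, cc_ss, Nat.choose_succ_succ]
    ring

lemma coeff_Vp : ∀ n (α : Fin 3 →₀ ℕ), coeff α (Vp n) =
    if α 0 + 2 * (α 1 + α 2) = n then (cc n (α 1 + α 2) * (α 1 + α 2).choose (α 1) : ℝ) else 0
  | 0, α => by
      rw [Vp, coeff_C]
      by_cases h : α 0 + 2 * (α 1 + α 2) = 0
      · have h0 : α 0 = 0 := by omega
        have h1 : α 1 = 0 := by omega
        have h2 : α 2 = 0 := by omega
        have : (0 : Fin 3 →₀ ℕ) = α := by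
          rw [eq_comm, fin3_eq_iff]; simp [h0, h1, h2]
        rw [if_pos this, if_pos h, h1, h2]
        norm_num [cc]
      · have : (0 : Fin 3 →₀ ℕ) ≠ α := by
          intro hc
          rw [eq_comm, fin3_eq_iff] at hc
          simp at hc
          omega
        rw [if_neg this, if_neg h]
  | 1, α => by
      rw [Vp, coeff_X']
      by_cases h : α 0 + 2 * (α 1 + α 2) = 1
      · have h0 : α 0 = 1 := by omega
        have h1 : α 1 = 0 := by omega
        have h2 : α 2 = 0 := by omega
        have : Finsupp.single (0 : Fin 3) 1 = α := by
          rw [eq_comm, fin3_eq_iff]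
          simp [h0, h1, h2, Finsupp.single_apply]
        rw [if_pos this, if_pos h, h1, h2]
        norm_num [cc]
      · have : Finsupp.single (0 : Fin 3) 1 ≠ α := by
          intro hc
          rw [eq_comm, fin3_eq_iff] at hc
          simp [Finsupp.single_apply] at hc
          omega
        rw [if_neg this, if_neg h]
  | (n+2), α => by
      rw [Vp, add_mul, coeff_add, coeff_add, coeff_X_mul', coeff_X_mul', coeff_X_mul',
        coeff_Vp (n+1), coeff_Vp n, coeff_Vp n]
      simp only [Finsupp.mem_support_iff, sub_single_apply, Finsupp.single_apply, ne_eq, ite_not,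
        f01, f02, f10, f12, f20, f21, if_true, if_false, eq_self_iff_true, ite_true, ite_false,
        Nat.sub_zero]
      exact step_eq n (α 0) (α 1) (α 2)

lemma stepY (k a b c : ℕ) :
    (if b = 0 then 0 else (if a = 0 ∧ (b-1) + c = k then ((k.choose (b-1)) : ℝ) else 0))
    + (if c = 0 then 0 else (if a = 0 ∧ b + (c-1) = k then ((k.choose b) : ℝ) else 0))
    = if a = 0 ∧ b + c = k+1 then (((k+1).choose b) : ℝ) else 0 := by
  rcases b with _ | b <;> rcases c with _ | c <;>
    simp only [Nat.succ_ne_zero, Nat.add_sub_cancel, if_true, if_false, ite_true, ite_false,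
      Nat.zero_add, Nat.add_zero, reduceIte]
  · rw [if_neg (by omega)]; norm_num
  · split_ifs with h1 h2 <;> try omega
    · norm_num
    · norm_num
  · split_ifs with h1 h2 <;> try omega
    · obtain ⟨-, rfl⟩ := h1
      norm_num [Nat.choose_self]
    · norm_num
  · split_ifs with h1 h2 h3 <;> try omega
    all_goals try norm_num
    exact_mod_cast (Nat.choose_succ_succ k b).symm

lemma coeff_Yk : ∀ (k : ℕ) (α : Fin 3 →₀ ℕ), coeff α ((X 1 + X 2 : MvPolynomial (Fin 3) ℝ) ^ k) =
    if α 0 = 0 ∧ α 1 + α 2 = k then (k.choose (α 1) : ℝ) else 0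
  | 0, α => by
      rw [pow_zero, ← C_1, coeff_C]
      by_cases h : α 0 = 0 ∧ α 1 + α 2 = 0
      · have : (0 : Fin 3 →₀ ℕ) = α := by
          rw [eq_comm, fin3_eq_iff]; simp; omega
        rw [if_pos this, if_pos h]
        have : α 1 = 0 := by omega
        simp [this]
      · have : (0 : Fin 3 →₀ ℕ) ≠ α := by
          intro hc
          rw [eq_comm, fin3_eq_iff] at hc
          simp at hc
          simp [hc] at h
        rw [if_neg this, if_neg h]
  | (k+1), α => by
      rw [pow_succ, mul_comm, add_mul, coeff_add, coeff_X_mul', coeff_X_mul',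
        coeff_Yk k, coeff_Yk k]
      simp only [Finsupp.mem_support_iff, sub_single_apply, Finsupp.single_apply, ne_eq, ite_not,
        f01, f02, f10, f12, f20, f21, if_true, if_false, eq_self_iff_true, ite_true, ite_false,
        Nat.sub_zero]
      exact stepY k (α 0) (α 1) (α 2)

/-! ### The block polynomial and its support -/

def fs (a b c : ℕ) : Fin 3 →₀ ℕ :=
  Finsupp.single 0 a + Finsupp.single 1 b + Finsupp.single 2 c

@[simp] lemma fs0 (a b c : ℕ) : fs a b c 0 = a := by
  simp [fs, Finsupp.single_apply, f10, f20]
@[simp] lemma fs1 (a b c : ℕ) : fs a b c 1 = b := by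
  simp [fs, Finsupp.single_apply, f01, f21]
@[simp] lemma fs2 (a b c : ℕ) : fs a b c 2 = c := by
  simp [fs, Finsupp.single_apply, f02, f12]

def SB1 (p s : ℕ) : Finset (Fin 3 →₀ ℕ) :=
  (Finset.Icc 1 s).biUnion fun k => (Finset.range (k+1)).image fun l => fs (p - 2*k) l (k - l)

def SB2 (p : ℕ) : Finset (Fin 3 →₀ ℕ) :=
  (Finset.range (p+1)).image fun l => fs 0 l (p - l)

def SBf (p s : ℕ) : Finset (Fin 3 →₀ ℕ) := SB1 p s ∪ SB2 p

lemma mem_SB1 {p s : ℕ} (hp : p = 2*s+1) (α : Fin 3 →₀ ℕ) :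
    α ∈ SB1 p s ↔ (α 0 + 2*(α 1 + α 2) = p ∧ 1 ≤ α 1 + α 2) := by
  simp only [SB1, Finset.mem_biUnion, Finset.mem_image, Finset.mem_Icc, Finset.mem_range]
  constructor
  · rintro ⟨k, ⟨hk1, hk2⟩, l, hl, rfl⟩
    rw [fs0, fs1, fs2]
    omega
  · rintro ⟨h1, h2⟩
    refine ⟨α 1 + α 2, ⟨h2, by omega⟩, α 1, by omega, ?_⟩
    rw [eq_comm, fin3_eq_iff, fs0, fs1, fs2]
    omega

lemma mem_SB2 {p : ℕ} (α : Fin 3 →₀ ℕ) :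
    α ∈ SB2 p ↔ (α 0 = 0 ∧ α 1 + α 2 = p) := by
  simp only [SB2, Finset.mem_image, Finset.mem_range]
  constructor
  · rintro ⟨l, hl, rfl⟩
    rw [fs0, fs1, fs2]
    omega
  · rintro ⟨h1, h2⟩
    refine ⟨α 1, by omega, ?_⟩
    rw [eq_comm, fin3_eq_iff, fs0, fs1, fs2]
    omega

lemma mem_SBf {p s : ℕ} (hp : p = 2*s+1) (α : Fin 3 →₀ ℕ) :
    α ∈ SBf p s ↔ ((α 0 + 2*(α 1 + α 2) = p ∧ 1 ≤ α 1 + α 2) ∨ (α 0 = 0 ∧ α 1 + α 2 = p)) := by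
  rw [SBf, Finset.mem_union, mem_SB1 hp, mem_SB2]

lemma card_SB1 {p s : ℕ} (hp : p = 2*s+1) :
    (SB1 p s).card = ∑ k ∈ Finset.Icc 1 s, (k+1) := by
  rw [SB1, Finset.card_biUnion]
  · refine Finset.sum_congr rfl fun k hk => ?_
    rw [Finset.card_image_of_injOn, Finset.card_range]
    intro l hl l' hl' hee
    have := congrArg (fun (β : Fin 3 →₀ ℕ) => β 1) hee
    simpa using this
  · intro k hk k' hk' hkk
    simp only [Finset.coe_Icc, Set.mem_Icc] at hk hk'
    rw [Function.onFun, Finset.disjoint_left]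
    rintro β hβ hβ'
    simp only [Finset.mem_image, Finset.mem_range] at hβ hβ'
    obtain ⟨l, hl, rfl⟩ := hβ
    obtain ⟨l', hl', he⟩ := hβ'
    apply hkk
    have h1 := congrArg (fun (β : Fin 3 →₀ ℕ) => β 1) he
    have h2 := congrArg (fun (β : Fin 3 →₀ ℕ) => β 2) he
    simp only [fs1, fs2] at h1 h2
    omega

lemma card_SB2 {p : ℕ} : (SB2 p).card = p + 1 := by
  rw [SB2, Finset.card_image_of_injOn, Finset.card_range]
  intro l hl l' hl' hee
  have := congrArg (fun (β : Fin 3 →₀ ℕ) => β 1) hee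
  simpa using this

lemma card_SBf {p s : ℕ} (hp : p = 2*s+1) :
    (SBf p s).card = (∑ k ∈ Finset.Icc 1 s, (k+1)) + (p + 1) := by
  rw [SBf, Finset.card_union_of_disjoint, card_SB1 hp, card_SB2]
  rw [Finset.disjoint_left]
  intro β hβ hβ'
  rw [mem_SB1 hp] at hβ
  rw [mem_SB2] at hβ'
  omega

def Bp (p : ℕ) : MvPolynomial (Fin 3) ℝ := Vp p - X 0 ^ p + (X 1 + X 2) ^ p

lemma coeff_Bp (p : ℕ) (α : Fin 3 →₀ ℕ) : coeff α (Bp p) =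
    (if α 0 + 2*(α 1 + α 2) = p then (cc p (α 1 + α 2) * (α 1 + α 2).choose (α 1) : ℝ) else 0)
    - (if Finsupp.single 0 p = α then 1 else 0)
    + (if α 0 = 0 ∧ α 1 + α 2 = p then (p.choose (α 1) : ℝ) else 0) := by
  rw [Bp, coeff_add, coeff_sub, coeff_Vp, coeff_Yk, coeff_X_pow]

lemma single_eq_iff (p : ℕ) (α : Fin 3 →₀ ℕ) :
    Finsupp.single (0 : Fin 3) p = α ↔ (α 0 = p ∧ α 1 = 0 ∧ α 2 = 0) := by
  rw [fin3_eq_iff]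
  simp [Finsupp.single_apply, f01, f02]
  tauto

lemma coeff_Bp_nonneg {p s : ℕ} (hp : p = 2*s+1) (α : Fin 3 →₀ ℕ) :
    0 ≤ coeff α (Bp p) := by
  rw [coeff_Bp]
  by_cases h2 : Finsupp.single (0 : Fin 3) p = α
  · rw [single_eq_iff] at h2
    obtain ⟨e0, e1, e2⟩ := h2
    rw [e0, e1, e2]
    rw [if_pos (by omega), if_pos (by rw [single_eq_iff]; omega), if_neg (by omega)]
    rw [cc_one p (by omega)]
    norm_num
  · rw [if_neg h2]
    have : ∀ (c : Prop) [Decidable c] (v : ℕ), (0:ℝ) ≤ if c then (v : ℝ) else 0 := by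
      intro c _ v; split_ifs <;> positivity
    have h1 := this (α 0 + 2*(α 1 + α 2) = p) (cc p (α 1 + α 2) * (α 1 + α 2).choose (α 1))
    have h3 := this (α 0 = 0 ∧ α 1 + α 2 = p) (p.choose (α 1))
    push_cast at h1 h3
    linarith

lemma coeff_Bp_ne_iff {p s : ℕ} (hp : p = 2*s+1) (hs1 : 1 ≤ s) (α : Fin 3 →₀ ℕ) :
    coeff α (Bp p) ≠ 0 ↔ α ∈ SBf p s := by
  rw [coeff_Bp, mem_SBf hp]
  constructor
  · intro h
    by_cases h3 : α 0 = 0 ∧ α 1 + α 2 = p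
    · exact Or.inr h3
    · rw [if_neg h3, add_zero] at h
      by_cases h1 : α 0 + 2*(α 1 + α 2) = p
      · by_cases hk : 1 ≤ α 1 + α 2
        · exact Or.inl ⟨h1, hk⟩
        · exfalso
          apply h
          have e1 : α 1 = 0 := by omega
          have e2 : α 2 = 0 := by omega
          rw [if_pos h1, if_pos (by rw [single_eq_iff]; omega), e1, e2]
          rw [cc_one p (by omega)]
          norm_num
      · exfalso
        apply h
        rw [if_neg h1, if_neg (by rw [single_eq_iff]; omega)]
        norm_num
  · intro h
    rcases h with ⟨h1, hk⟩ | ⟨h0, hsum⟩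
    · rw [if_pos h1, if_neg (by rw [single_eq_iff]; omega), if_neg (by omega), sub_zero, add_zero]
      have c1 : 0 < cc p (α 1 + α 2) := cc_pos p _ (by omega)
      have c2 : 0 < (α 1 + α 2).choose (α 1) := Nat.choose_pos (by omega)
      positivity
    · rw [if_neg (by omega), if_neg (by rw [single_eq_iff]; omega), if_pos ⟨h0, hsum⟩]
      have c2 : 0 < p.choose (α 1) := Nat.choose_pos (by omega)
      positivity

lemma eval_Bp (p : ℕ) (hodd : Odd p) (x y z : ℝ) (h : x + y + z = 1) :
    eval ![x,y,z] (Bp p) = 1 - x ^ p := by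
  rw [Bp, map_add, map_sub, eval_Vp x y z h p, map_pow, map_pow, eval_X, map_add, eval_X, eval_X]
  have h0 : (![x,y,z] : Fin 3 → ℝ) 0 = x := rfl
  have h1 : (![x,y,z] : Fin 3 → ℝ) 1 = y := rfl
  have h2 : (![x,y,z] : Fin 3 → ℝ) 2 = z := rfl
  rw [h0, h1, h2]
  have hyz : y + z = 1 - x := by linarith
  have hneg : (x - 1)^p = -((1-x)^p) := by
    rw [show x - 1 = -(1-x) by ring, hodd.neg_pow]
  rw [hyz, hneg]
  ring

lemma geom_aux (x : ℝ) (p : ℕ) : ∀ m, ∑ i ∈ Finset.range m, x^(i*p) * (1 - x^p) = 1 - x^(m*p)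
  | 0 => by simp
  | (m+1) => by
      rw [Finset.sum_range_succ, geom_aux x p m, show (m+1)*p = m*p + p by ring, pow_add]
      ring

lemma window_eq {p : ℕ} (hp : 0 < p) {i j u v : ℕ} (hu : u < p) (hv : v < p)
    (h : i*p + u = j*p + v) : i = j := by
  have h1 : (i*p + u)/p = i := by
    rw [Nat.add_comm, Nat.mul_comm, Nat.add_mul_div_left _ _ hp, Nat.div_eq_of_lt hu,
      Nat.zero_add]
  have h2 : (j*p + v)/p = j := by
    rw [Nat.add_comm, Nat.mul_comm, Nat.add_mul_div_left _ _ hp, Nat.div_eq_of_lt hv,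
      Nat.zero_add]
  rw [← h1, ← h2, h]

lemma gauss : ∀ s : ℕ, (2*s+2)*(2*s+4) = 8 * ((∑ k ∈ Finset.Icc 1 s, (k+1)) + 1)
  | 0 => by simp
  | (t+1) => by
      rw [Finset.sum_Icc_succ_top (by omega : 1 ≤ t+1)]
      have h := gauss t
      ring_nf
      ring_nf at h
      linarith

end Stmt15

open Stmt15

/-- Gap termination for `⟨ωI₁ ⊕ ω²I₂⟩`, `ω` a primitive `p`-th root of unity
(`p` odd): with `M = (p+1)(p+3)/8 + p + 1` the rank of `f_{p,2}(x₁, x₂+x₃)`, every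
`N ≥ M² − 2M + 2` is realized as the rank of an invariant polynomial with
non-negative coefficients equal to `1` on the hyperplane `x₁ + x₂ + x₃ = 1`. -/
theorem stmt_15 (p : ℕ) (hp : 3 ≤ p) (hodd : Odd p) (N : ℕ)
    (hN : ((p + 1) * (p + 3) / 8 + p + 1) ^ 2 - 2 * ((p + 1) * (p + 3) / 8 + p + 1) + 2 ≤ N) :
    ∃ g : MvPolynomial (Fin 3) ℝ,
      (∀ α, 0 ≤ g.coeff α) ∧
      (∀ x₁ x₂ x₃ : ℝ, x₁ + x₂ + x₃ = 1 → eval ![x₁, x₂, x₃] g = 1) ∧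
      (∀ α ∈ g.support, p ∣ α 0 + 2 * α 1 + 2 * α 2) ∧
      g.support.card = N := by
  classical
  obtain ⟨s, hps⟩ := hodd
  have hs1 : 1 ≤ s := by omega
  -- arithmetic setup
  have hgauss : (p+1)*(p+3) = 8 * ((∑ k ∈ Finset.Icc 1 s, (k+1)) + 1) := by
    rw [hps, show 2*s+1+1 = 2*s+2 from rfl, show 2*s+1+3 = 2*s+4 from rfl]
    exact gauss s
  have hdiv : (p+1)*(p+3)/8 = (∑ k ∈ Finset.Icc 1 s, (k+1)) + 1 := by
    rw [hgauss]
    exact Nat.mul_div_cancel_left _ (by norm_num)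
  set KK := ∑ k ∈ Finset.Icc 1 s, (k+1) with hKK
  set m1 := KK + p + 1 with hm1
  have hM : (p+1)*(p+3)/8 + p + 1 = m1 + 1 := by rw [hdiv]; omega
  have hm1pos : 0 < m1 := by omega
  have hN' : m1 * m1 + 1 ≤ N := by
    rw [hM, show (m1+1)^2 = m1*m1 + 2*m1 + 1 by ring] at hN
    set q := m1 * m1 with hq
    omega
  set n := (N-1)/m1 with hn
  set b := (N-1) % m1 with hb
  have hblt : b < m1 := Nat.mod_lt _ hm1pos
  have hmn : m1 ≤ n := by
    rw [hn]
    rw [Nat.le_div_iff_mul_le hm1pos]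
    set q := m1 * m1 with hq
    omega
  have hbn : b < n := lt_of_lt_of_le hblt hmn
  have hdm : m1 * n + b = N - 1 := Nat.div_add_mod (N-1) m1
  -- index sets
  set T : Finset ℕ := Finset.range b ∪ {n} with hT
  have hnT : n ∈ T := by simp [hT]
  have hmemT : ∀ m ∈ T, m ≤ n := by
    intro m hm
    simp only [hT, Finset.mem_union, Finset.mem_range, Finset.mem_singleton] at hm
    omega
  have hTcard : T.card = b + 1 := by
    rw [hT, Finset.card_union_of_disjoint (by simp [Finset.disjoint_singleton_right]; omega)]
    simp
  have hcnt : ∀ i, i < n → 0 < (T.filter fun m => i < m).card := by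
    intro i hi
    exact Finset.card_pos.2 ⟨n, Finset.mem_filter.2 ⟨hnT, hi⟩⟩
  -- the polynomial
  set G : MvPolynomial (Fin 3) ℝ :=
    C (((b:ℝ)+1))⁻¹ * (∑ m ∈ T, (X 0)^(m*p)
      + ∑ i ∈ Finset.range n, C (((T.filter fun m => i < m).card : ℕ) : ℝ) * ((X 0)^(i*p) * Bp p))
    with hG
  have hbne : ((b:ℝ)+1) ≠ 0 := by positivity
  set Pf : (Fin 3 →₀ ℕ) → ℝ :=
    fun α => ∑ m ∈ T, if Finsupp.single (0:Fin 3) (m*p) = α then (1:ℝ) else 0 with hPf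
  set Qf : (Fin 3 →₀ ℕ) → ℝ :=
    fun α => ∑ i ∈ Finset.range n, (((T.filter fun m => i < m).card : ℕ) : ℝ) *
      (if Finsupp.single (0:Fin 3) (i*p) ≤ α then coeff (α - Finsupp.single 0 (i*p)) (Bp p) else 0)
    with hQf
  have hcoeff : ∀ α, coeff α G = ((b:ℝ)+1)⁻¹ * (Pf α + Qf α) := by
    intro α
    rw [hG, coeff_C_mul, coeff_add, coeff_sum, coeff_sum, hPf, hQf]
    congr 2
    · exact Finset.sum_congr rfl fun m _ => coeff_X_pow 0 α (m*p)
    · refine Finset.sum_congr rfl fun i _ => ?_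
      rw [coeff_C_mul, X_pow_eq_monomial, coeff_monomial_mul']
      simp only [one_mul]
  have hPnonneg : ∀ α, (0:ℝ) ≤ Pf α := by
    intro α
    rw [hPf]
    apply Finset.sum_nonneg
    intro m _
    split_ifs <;> norm_num
  have hQtnonneg : ∀ (α : Fin 3 →₀ ℕ) i, (0:ℝ) ≤ (((T.filter fun m => i < m).card : ℕ) : ℝ) *
      (if Finsupp.single (0:Fin 3) (i*p) ≤ α then coeff (α - Finsupp.single 0 (i*p)) (Bp p) else 0) := by
    intro α i
    refine mul_nonneg (Nat.cast_nonneg _) ?_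
    split_ifs
    · exact coeff_Bp_nonneg hps _
    · exact le_rfl
  have hQnonneg : ∀ α, (0:ℝ) ≤ Qf α := by
    intro α
    rw [hQf]
    exact Finset.sum_nonneg fun i _ => hQtnonneg α i
  -- evaluation
  have heval : ∀ x y z : ℝ, x + y + z = 1 → eval ![x,y,z] G = 1 := by
    intro x y z hxyz
    have hx0 : ∀ k : ℕ, eval ![x,y,z] ((X 0 : MvPolynomial (Fin 3) ℝ)^k) = x^k := by
      intro k; rw [map_pow, eval_X]; rfl
    rw [hG, map_mul, map_add, map_sum, map_sum, eval_C]
    have h1 : ∀ m ∈ T, eval ![x,y,z] ((X 0 : MvPolynomial (Fin 3) ℝ)^(m*p)) = x^(m*p) :=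
      fun m _ => hx0 _
    rw [Finset.sum_congr rfl h1]
    have h2 : ∀ i ∈ Finset.range n,
        eval ![x,y,z] (C (((T.filter fun m => i < m).card : ℕ) : ℝ) * ((X 0)^(i*p) * Bp p))
        = (((T.filter fun m => i < m).card : ℕ) : ℝ) * (x^(i*p) * (1 - x^p)) := by
      intro i _
      rw [map_mul, map_mul, eval_C, hx0, eval_Bp p ⟨s, hps⟩ x y z hxyz]
    rw [Finset.sum_congr rfl h2]
    have hswap : ∑ i ∈ Finset.range n, (((T.filter fun m => i < m).card : ℕ) : ℝ) *
        (x^(i*p) * (1 - x^p)) = ∑ m ∈ T, (1 - x^(m*p)) := by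
      have e1 : ∀ i ∈ Finset.range n, (((T.filter fun m => i < m).card : ℕ) : ℝ) *
          (x^(i*p) * (1 - x^p)) = ∑ m ∈ T, (if i < m then x^(i*p) * (1 - x^p) else 0) := by
        intro i _
        rw [← Finset.sum_filter, Finset.sum_const, nsmul_eq_mul]
      rw [Finset.sum_congr rfl e1, Finset.sum_comm]
      refine Finset.sum_congr rfl fun m hm => ?_
      have hflt : (Finset.range n).filter (fun i => i < m) = Finset.range m := by
        ext j
        simp only [Finset.mem_filter, Finset.mem_range]
        have := hmemT m hm
        omega
      rw [← Finset.sum_filter, hflt, geom_aux]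
    rw [hswap, ← Finset.sum_add_distrib]
    have : ∀ m ∈ T, x^(m*p) + (1 - x^(m*p)) = 1 := fun m _ => by ring
    rw [Finset.sum_congr rfl this, Finset.sum_const, hTcard, nsmul_eq_mul]
    push_cast
    field_simp
  have hbposinv : (0:ℝ) < ((b:ℝ)+1)⁻¹ := by
    apply inv_pos.2
    have := Nat.cast_nonneg (α := ℝ) b
    linarith
  -- the support set
  set S : Finset (Fin 3 →₀ ℕ) :=
    T.image (fun m => Finsupp.single (0:Fin 3) (m*p))
    ∪ (Finset.range n).biUnion
        (fun i => (SBf p s).image (fun β => Finsupp.single (0:Fin 3) (i*p) + β)) with hS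
  have hiff : ∀ α, coeff α G ≠ 0 ↔ α ∈ S := by
    intro α
    rw [hcoeff, hS]
    constructor
    · intro h
      have h2 : Pf α ≠ 0 ∨ Qf α ≠ 0 := by
        by_contra hc
        push_neg at hc
        apply h
        rw [hc.1, hc.2]
        ring
      rcases h2 with h2 | h2
      · rw [hPf] at h2
        obtain ⟨m, hm, hne⟩ := Finset.exists_ne_zero_of_sum_ne_zero h2
        have hma : Finsupp.single (0:Fin 3) (m*p) = α := by
          by_contra hcc
          rw [if_neg hcc] at hne
          exact hne rfl
        exact Finset.mem_union_left _ (Finset.mem_image.2 ⟨m, hm, hma⟩)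
      · rw [hQf] at h2
        obtain ⟨i, hi, hne⟩ := Finset.exists_ne_zero_of_sum_ne_zero h2
        have hle : Finsupp.single (0:Fin 3) (i*p) ≤ α := by
          by_contra hcc
          rw [if_neg hcc, mul_zero] at hne
          exact hne rfl
        rw [if_pos hle] at hne
        have hcb : coeff (α - Finsupp.single 0 (i*p)) (Bp p) ≠ 0 := by
          intro h0
          rw [h0, mul_zero] at hne
          exact hne rfl
        rw [coeff_Bp_ne_iff hps hs1] at hcb
        refine Finset.mem_union_right _ (Finset.mem_biUnion.2 ⟨i, hi, Finset.mem_image.2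
          ⟨_, hcb, add_tsub_cancel_of_le hle⟩⟩)
    · intro h
      have hpos : (0:ℝ) < Pf α + Qf α := by
        rcases Finset.mem_union.1 h with h | h
        · obtain ⟨m, hm, hma⟩ := Finset.mem_image.1 h
          have hP1 : (1:ℝ) ≤ Pf α := by
            have hle2 : (if Finsupp.single (0:Fin 3) (m*p) = α then (1:ℝ) else 0) ≤ Pf α := by
              rw [hPf]
              show _ ≤ ∑ m' ∈ T, if Finsupp.single (0:Fin 3) (m'*p) = α then (1:ℝ) else 0
              exact Finset.single_le_sum
                (f := fun m' => if Finsupp.single (0:Fin 3) (m'*p) = α then (1:ℝ) else 0)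
                (fun m' _ => by split_ifs <;> norm_num) hm
            rw [if_pos hma] at hle2
            exact hle2
          have := hQnonneg α
          linarith
        · obtain ⟨i, hi, hmem⟩ := Finset.mem_biUnion.1 h
          obtain ⟨β, hβ, hβα⟩ := Finset.mem_image.1 hmem
          rw [Finset.mem_range] at hi
          have hle : Finsupp.single (0:Fin 3) (i*p) ≤ α := by
            rw [← hβα]; exact le_self_add
          have hsub : α - Finsupp.single 0 (i*p) = β := by
            rw [← hβα, add_tsub_cancel_left]
          have hterm : (0:ℝ) < (((T.filter fun m => i < m).card : ℕ) : ℝ) *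
              (if Finsupp.single (0:Fin 3) (i*p) ≤ α then
                coeff (α - Finsupp.single 0 (i*p)) (Bp p) else 0) := by
            rw [if_pos hle, hsub]
            have hne : coeff β (Bp p) ≠ 0 := (coeff_Bp_ne_iff hps hs1 β).2 hβ
            have hge := coeff_Bp_nonneg hps β
            have hlt : (0:ℝ) < coeff β (Bp p) := lt_of_le_of_ne hge (Ne.symm hne)
            have hc := hcnt i hi
            exact mul_pos (by exact_mod_cast hc) hlt
          have hQ : (0:ℝ) < Qf α := by
            rw [hQf]
            exact Finset.sum_pos' (fun j _ => hQtnonneg α j) ⟨i, Finset.mem_range.2 hi, hterm⟩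
          have := hPnonneg α
          linarith
      exact ne_of_gt (mul_pos hbposinv hpos)
  have hsupp : G.support = S := by
    ext α
    rw [MvPolynomial.mem_support_iff, hiff]
  -- coordinate helpers
  have hsg0 : ∀ t:ℕ, (Finsupp.single (0:Fin 3) t) 0 = t := fun t => Finsupp.single_eq_same
  have hsg1 : ∀ t:ℕ, (Finsupp.single (0:Fin 3) t) 1 = 0 :=
    fun t => Finsupp.single_eq_of_ne (by decide)
  have hsg2 : ∀ t:ℕ, (Finsupp.single (0:Fin 3) t) 2 = 0 :=
    fun t => Finsupp.single_eq_of_ne (by decide)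
  have hβfacts : ∀ β ∈ SBf p s, β 0 + 2 ≤ p ∧ 1 ≤ β 1 + β 2 ∧
      (β 0 + 2*β 1 + 2*β 2 = p ∨ β 0 + 2*β 1 + 2*β 2 = 2*p) := by
    intro β hβ
    rw [mem_SBf hps] at hβ
    omega
  -- cardinality
  have hdisj12 : Disjoint (T.image (fun m => Finsupp.single (0:Fin 3) (m*p)))
      ((Finset.range n).biUnion
        (fun i => (SBf p s).image (fun β => Finsupp.single (0:Fin 3) (i*p) + β))) := by
    rw [Finset.disjoint_left]
    intro α h1 h2
    obtain ⟨m, hm, hma⟩ := Finset.mem_image.1 h1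
    obtain ⟨i, hi, hmem⟩ := Finset.mem_biUnion.1 h2
    obtain ⟨β, hβ, hβα⟩ := Finset.mem_image.1 hmem
    have e1 : α 1 = 0 := by rw [← hma]; exact hsg1 _
    have e2 : α 2 = 0 := by rw [← hma]; exact hsg2 _
    have f1 : α 1 = β 1 := by rw [← hβα, Finsupp.add_apply, hsg1, Nat.zero_add]
    have f2 : α 2 = β 2 := by rw [← hβα, Finsupp.add_apply, hsg2, Nat.zero_add]
    have := (hβfacts β hβ).2.1
    omega
  have hcard : G.support.card = N := by
    rw [hsupp, hS, Finset.card_union_of_disjoint hdisj12]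
    have hc1 : (T.image (fun m => Finsupp.single (0:Fin 3) (m*p))).card = b + 1 := by
      rw [Finset.card_image_of_injOn, hTcard]
      intro m _ m' _ he
      have := congrArg (fun (γ : Fin 3 →₀ ℕ) => γ 0) he
      simp only [hsg0] at this
      exact Nat.eq_of_mul_eq_mul_right (by omega) this
    have hc2 : ((Finset.range n).biUnion
        (fun i => (SBf p s).image (fun β => Finsupp.single (0:Fin 3) (i*p) + β))).card
        = n * m1 := by
      rw [Finset.card_biUnion]
      · have hone : ∀ i ∈ Finset.range n,
            ((SBf p s).image (fun β => Finsupp.single (0:Fin 3) (i*p) + β)).card = m1 := by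
          intro i _
          rw [Finset.card_image_of_injective _ (add_right_injective _), card_SBf hps]
          omega
        rw [Finset.sum_congr rfl hone, Finset.sum_const, Finset.card_range, smul_eq_mul]
      · intro i _ j _ hij
        rw [Function.onFun, Finset.disjoint_left]
        intro α h1 h2
        obtain ⟨β, hβ, hβα⟩ := Finset.mem_image.1 h1
        obtain ⟨β', hβ', hβ'α⟩ := Finset.mem_image.1 h2
        apply hij
        have e0 : i*p + β 0 = j*p + β' 0 := by
          have g1 : α 0 = i*p + β 0 := by rw [← hβα, Finsupp.add_apply, hsg0]
          have g2 : α 0 = j*p + β' 0 := by rw [← hβ'α, Finsupp.add_apply, hsg0]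
          omega
        exact window_eq (by omega) (by have := (hβfacts β hβ).1; omega)
          (by have := (hβfacts β' hβ').1; omega) e0
    rw [hc1, hc2]
    have hN1 : 1 ≤ N := by
      set q := m1 * m1 with hq
      omega
    set R := m1 * n with hR
    have hR' : n * m1 = R := by rw [hR, Nat.mul_comm]
    rw [hR']
    omega
  -- divisibility
  have hdvd : ∀ α ∈ G.support, p ∣ α 0 + 2 * α 1 + 2 * α 2 := by
    intro α hα
    rw [hsupp, hS] at hα
    rcases Finset.mem_union.1 hα with h1 | h2
    · obtain ⟨m, _, hma⟩ := Finset.mem_image.1 h1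
      have e0 : α 0 = m*p := by rw [← hma]; exact hsg0 _
      have e1 : α 1 = 0 := by rw [← hma]; exact hsg1 _
      have e2 : α 2 = 0 := by rw [← hma]; exact hsg2 _
      rw [e0, e1, e2]
      simpa using dvd_mul_left p m
    · obtain ⟨i, _, hmem⟩ := Finset.mem_biUnion.1 h2
      obtain ⟨β, hβ, hβα⟩ := Finset.mem_image.1 hmem
      have e0 : α 0 = i*p + β 0 := by rw [← hβα, Finsupp.add_apply, hsg0]
      have e1 : α 1 = β 1 := by rw [← hβα, Finsupp.add_apply, hsg1, Nat.zero_add]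
      have e2 : α 2 = β 2 := by rw [← hβα, Finsupp.add_apply, hsg2, Nat.zero_add]
      rw [e0, e1, e2, add_assoc, add_assoc]
      refine dvd_add (dvd_mul_left p i) ?_
      rcases (hβfacts β hβ).2.2 with hw | hw
      · rw [show β 0 + (2*β 1 + 2*β 2) = p by omega]
      · rw [show β 0 + (2*β 1 + 2*β 2) = 2*p by omega]
        exact dvd_mul_left p 2
  -- assemble
  refine ⟨G, ?_, heval, hdvd, hcard⟩
  intro α
  rw [hcoeff α]
  exact mul_nonneg (le_of_lt hbposinv) (add_nonneg (hPnonneg α) (hQnonneg α))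
end
end
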